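/- arXiv:2204.01595 — 5 statements merged into one kernel-verified Lean document; each statement's English description precedes it below -/
import Mathlib

section
/- Let d, n ∈ ℕ with d ≥ 1 and n ≥ 2^{d−1} + 1, and let P ∈ ℝ[X_1,…,X_n] be a symmetric multi-affine polynomial with deg P = d. Then every connected component of Z(P, ℝ^n) intersects the hyperplane {x ∈ ℝ^n : x_n = 0}. -/
open MvPolynomial

section AuxConnectedComponents

open Finset

noncomputable section

/-- `esymmFun k y` : the `k`-th elementary symmetric function of the coordinates of `y`,
defined via the generating polynomial `∏ (y i • X + 1)`. -/
def esymmFun {μ : ℕ} (k : ℕ) (y : Fin μ → ℝ) : ℝ :=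
  (∏ i, (Polynomial.C (y i) * Polynomial.X + 1)).coeff k

lemma esymmFun_zero {μ : ℕ} (y : Fin μ → ℝ) : esymmFun 0 y = 1 := by
  classical
  simp only [esymmFun, Polynomial.coeff_zero_eq_eval_zero, Polynomial.eval_prod]
  simp

lemma esymmFun_snoc (k : ℕ) {μ : ℕ} (y : Fin μ → ℝ) (t : ℝ) :
    esymmFun (k + 1) (Fin.snoc y t) = esymmFun (k + 1) y + t * esymmFun k y := by
  classical
  simp only [esymmFun, Fin.prod_univ_castSucc, Fin.snoc_castSucc, Fin.snoc_last]
  rw [mul_add, mul_one, Polynomial.coeff_add, ← mul_assoc, Polynomial.coeff_mul_X,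
    Polynomial.coeff_mul_C]
  ring

lemma esymmFun_of_gt {μ : ℕ} {k : ℕ} (h : μ < k) (y : Fin μ → ℝ) : esymmFun k y = 0 := by
  classical
  apply Polynomial.coeff_eq_zero_of_natDegree_lt
  calc (∏ i, (Polynomial.C (y i) * Polynomial.X + 1)).natDegree
      ≤ ∑ i : Fin μ, (Polynomial.C (y i) * Polynomial.X + 1).natDegree :=
        Polynomial.natDegree_prod_le _ _
    _ ≤ ∑ _i : Fin μ, 1 := by
        refine Finset.sum_le_sum fun i _ => ?_
        refine le_trans (Polynomial.natDegree_add_le _ _) ?_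
        simp [Polynomial.natDegree_C_mul_le]
        exact le_trans (Polynomial.natDegree_C_mul_le _ _) (by simp)
    _ = μ := by simp
    _ < k := h

lemma esymmFun_one {μ : ℕ} (y : Fin μ → ℝ) : esymmFun 1 y = ∑ i, y i := by
  induction μ with
  | zero => simp [esymmFun, Polynomial.coeff_one]
  | succ ν ih =>
      have h1 : esymmFun 1 y
          = esymmFun 1 (Fin.init y) + y (Fin.last ν) * esymmFun 0 (Fin.init y) := by
        conv_lhs => rw [← Fin.snoc_init_self y]
        exact esymmFun_snoc 0 _ _
      rw [h1, ih, esymmFun_zero, mul_one, Fin.sum_univ_castSucc]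
      simp [Fin.init]

lemma continuous_esymmFun {μ : ℕ} (k : ℕ) : Continuous (esymmFun k : (Fin μ → ℝ) → ℝ) := by
  induction μ generalizing k with
  | zero =>
      have : (esymmFun k : (Fin 0 → ℝ) → ℝ) = fun _ => esymmFun k (fun i : Fin 0 => (0:ℝ)) := by
        funext y; congr 1; funext i; exact absurd i.2 (by omega)
      rw [this]; exact continuous_const
  | succ ν ih =>
      have hinit : Continuous (fun y : Fin (ν+1) → ℝ => Fin.init y) :=
        continuous_pi fun i => continuous_apply _
      cases k with
      | zero =>
          have : (esymmFun 0 : (Fin (ν+1) → ℝ) → ℝ) = fun _ => 1 := funext esymmFun_zero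
          rw [this]; exact continuous_const
      | succ k =>
          have hfun : (esymmFun (k+1) : (Fin (ν+1) → ℝ) → ℝ) = fun y =>
              esymmFun (k+1) (Fin.init y) + y (Fin.last ν) * esymmFun k (Fin.init y) := by
            funext y
            conv_lhs => rw [← Fin.snoc_init_self y]
            exact esymmFun_snoc k (Fin.init y) (y (Fin.last ν))
          rw [hfun]
          exact ((ih (k+1)).comp hinit).add ((continuous_apply _).mul ((ih k).comp hinit))

lemma sum_powersetCard_snoc {ν : ℕ} (k : ℕ) (z : Fin ν → ℝ) (t : ℝ) :
    ∑ S ∈ Finset.powersetCard (k + 1) (Finset.univ : Finset (Fin (ν + 1))),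
        ∏ i ∈ S, (Fin.snoc z t : Fin (ν + 1) → ℝ) i
      = (∑ S ∈ Finset.powersetCard (k + 1) (Finset.univ : Finset (Fin ν)), ∏ i ∈ S, z i)
        + t * ∑ S ∈ Finset.powersetCard k (Finset.univ : Finset (Fin ν)), ∏ i ∈ S, z i := by
  classical
  have hnot : Fin.last ν ∉ Finset.map Fin.castSuccEmb (Finset.univ : Finset (Fin ν)) := by
    simp only [Finset.mem_map, Finset.mem_univ, true_and, not_exists]
    intro j hj
    have := congrArg Fin.val hj
    simp only [Fin.coe_castSuccEmb] at this
    have hjlt := j.isLt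
    simp only [Fin.coe_castSucc, Fin.val_last] at this
    omega
  have huniv : (Finset.univ : Finset (Fin (ν + 1)))
      = insert (Fin.last ν) (Finset.map Fin.castSuccEmb Finset.univ) := by
    rw [Fin.univ_castSuccEmb, Finset.cons_eq_insert]
  have hdisj : Disjoint
      (Finset.powersetCard (k + 1) (Finset.map Fin.castSuccEmb (Finset.univ : Finset (Fin ν))))
      ((Finset.powersetCard k (Finset.map Fin.castSuccEmb
          (Finset.univ : Finset (Fin ν)))).image (insert (Fin.last ν))) := by
    rw [Finset.disjoint_left]
    intro S hS1 hS2
    obtain ⟨T, _, rfl⟩ := Finset.mem_image.mp hS2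
    exact hnot ((Finset.mem_powersetCard.mp hS1).1 (Finset.mem_insert_self _ _))
  rw [huniv, Finset.powersetCard_succ_insert hnot, Finset.sum_union hdisj]
  congr 1
  · -- sets avoiding `last`
    rw [Finset.powersetCard_map, Finset.sum_map]
    apply Finset.sum_congr rfl
    intro T _
    have hemb : (Finset.mapEmbedding (Fin.castSuccEmb (n := ν))).toEmbedding T
        = T.map Fin.castSuccEmb := rfl
    rw [hemb, Finset.prod_map]
    apply Finset.prod_congr rfl
    intro j _
    show (Fin.snoc z t : Fin (ν + 1) → ℝ) (Fin.castSucc j) = z j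
    simp
  · -- sets containing `last`
    rw [Finset.sum_image ?hinj]
    case hinj =>
      intro T1 h1 T2 h2 he
      have hl1 : Fin.last ν ∉ T1 := fun hmem => hnot ((Finset.mem_powersetCard.mp h1).1 hmem)
      have hl2 : Fin.last ν ∉ T2 := fun hmem => hnot ((Finset.mem_powersetCard.mp h2).1 hmem)
      rw [← Finset.erase_insert hl1, ← Finset.erase_insert hl2, he]
    rw [Finset.powersetCard_map, Finset.sum_map, Finset.mul_sum]
    apply Finset.sum_congr rfl
    intro T _
    have hemb : (Finset.mapEmbedding (Fin.castSuccEmb (n := ν))).toEmbedding T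
        = T.map Fin.castSuccEmb := rfl
    rw [hemb]
    have hlnot : Fin.last ν ∉ Finset.map Fin.castSuccEmb T := by
      intro hmem
      obtain ⟨j, _, hj⟩ := Finset.mem_map.mp hmem
      have := congrArg Fin.val hj
      simp only [Fin.coe_castSuccEmb, Fin.coe_castSucc, Fin.val_last] at this
      have := j.isLt
      omega
    rw [Finset.prod_insert hlnot, Finset.prod_map]
    have h1 : (Fin.snoc z t : Fin (ν + 1) → ℝ) (Fin.last ν) = t := by simp
    rw [h1]
    congr 1
    apply Finset.prod_congr rfl
    intro j _
    show (Fin.snoc z t : Fin (ν + 1) → ℝ) (Fin.castSucc j) = z j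
    simp

lemma esymmFun_eq_sum {μ : ℕ} (k : ℕ) (y : Fin μ → ℝ) :
    esymmFun k y = ∑ S ∈ Finset.powersetCard k Finset.univ, ∏ i ∈ S, y i := by
  induction μ generalizing k with
  | zero =>
      cases k with
      | zero => rw [esymmFun_zero, Finset.powersetCard_zero]; simp
      | succ k =>
          rw [esymmFun_of_gt (by omega)]
          rw [Finset.powersetCard_eq_empty.mpr (by simp)]
          simp
  | succ ν ih =>
      cases k with
      | zero => rw [esymmFun_zero, Finset.powersetCard_zero]; simp
      | succ k =>
          conv_lhs => rw [← Fin.snoc_init_self y]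
          rw [esymmFun_snoc, ih, ih]
          conv_rhs => rw [← Fin.snoc_init_self y]
          exact (sum_powersetCard_snoc k (Fin.init y) (y (Fin.last ν))).symm

/-- `chainF c y = Σ_k c k * e_k(y)`. -/
def chainF {μ : ℕ} (c : ℕ → ℝ) (y : Fin μ → ℝ) : ℝ :=
  ∑ k ∈ Finset.range (μ + 1), c k * esymmFun k y

lemma continuous_chainF {μ : ℕ} (c : ℕ → ℝ) :
    Continuous (chainF c : (Fin μ → ℝ) → ℝ) :=
  continuous_finset_sum _ fun k _ => continuous_const.mul (continuous_esymmFun k)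

lemma chainF_snoc {μ : ℕ} (c : ℕ → ℝ) (y : Fin μ → ℝ) (t : ℝ) :
    chainF c (Fin.snoc y t) = chainF c y + t * chainF (fun k => c (k + 1)) y := by
  have hz : esymmFun (μ + 1) y = 0 := esymmFun_of_gt (Nat.lt_succ_self μ) y
  have e1 : chainF c (Fin.snoc y t : Fin (μ + 1) → ℝ)
      = (∑ k ∈ Finset.range (μ + 1),
          c (k + 1) * esymmFun (k + 1) (Fin.snoc y t : Fin (μ + 1) → ℝ))
        + c 0 * esymmFun 0 (Fin.snoc y t : Fin (μ + 1) → ℝ) := Finset.sum_range_succ' _ _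
  have e4 : (∑ k ∈ Finset.range (μ + 1), c (k + 1) * esymmFun (k + 1) y) + c 0 * esymmFun 0 y
      = chainF c y + c (μ + 1) * esymmFun (μ + 1) y := by
    have h6 := Finset.sum_range_succ' (fun k => c k * esymmFun k y) (μ + 1)
    rw [Finset.sum_range_succ (fun k => c k * esymmFun k y) (μ + 1)] at h6
    rw [chainF]
    linarith [h6]
  rw [hz, mul_zero, add_zero, esymmFun_zero, mul_one] at e4
  rw [e1]
  simp only [esymmFun_snoc, esymmFun_zero, mul_one, mul_add, Finset.sum_add_distrib]
  have e5 : ∑ k ∈ Finset.range (μ + 1), c (k + 1) * (t * esymmFun k y)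
      = t * chainF (fun k => c (k + 1)) y := by
    rw [chainF, Finset.mul_sum]
    exact Finset.sum_congr rfl fun k _ => by ring
  rw [e5]
  linarith [e4]

/- ### small real analysis helpers -/

lemma slope_nonneg_of_forall_ge {a b t0 : ℝ} (h : ∀ t, t0 ≤ t → 0 ≤ a + t * b) : 0 ≤ b := by
  by_contra hb
  push_neg at hb
  have ht := h (max t0 ((a + 1) / (-b))) (le_max_left _ _)
  have h2 : (a + 1) / (-b) ≤ max t0 ((a + 1) / (-b)) := le_max_right _ _
  have hbne : b ≠ 0 := ne_of_lt hb
  have key : (a + 1) / (-b) * b = -(a + 1) := by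
    rw [div_mul_eq_mul_div, div_neg, mul_div_cancel_right₀ _ hbne]
  nlinarith [mul_le_mul_of_nonpos_right h2 (le_of_lt hb)]

lemma slope_nonpos_of_forall_le {a b t0 : ℝ} (h : ∀ t, t ≤ t0 → 0 ≤ a + t * b) : b ≤ 0 := by
  have : ∀ t, -t0 ≤ t → 0 ≤ a + t * (-b) := fun t ht => by
    have := h (-t) (by linarith); linarith [this]
  linarith [slope_nonneg_of_forall_ge this]

lemma slope_zero_of_forall {a b : ℝ} (h : ∀ t : ℝ, 0 ≤ a + t * b) : b = 0 := by
  have h1 : 0 ≤ b := slope_nonneg_of_forall_ge (t0 := 0) fun t _ => h t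
  have h2 : b ≤ 0 := slope_nonpos_of_forall_le (t0 := 0) fun t _ => h t
  linarith

/-- On a preconnected set where a continuous function never vanishes, any two values
have positive product. -/
lemma sign_const_on_preconnected {X : Type*} [TopologicalSpace X] {s : Set X}
    (hs : IsPreconnected s) {f : X → ℝ} (hf : ContinuousOn f s)
    (hne : ∀ z ∈ s, f z ≠ 0) {a b : X} (ha : a ∈ s) (hb : b ∈ s) : 0 < f a * f b := by
  rcases lt_trichotomy (f a * f b) 0 with h | h | h
  · exfalso
    rcases mul_neg_iff.mp h with ⟨hpa, hpb⟩ | ⟨hpa, hpb⟩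
    · obtain ⟨z, hz, hz0⟩ := hs.intermediate_value hb ha hf ⟨le_of_lt hpb, le_of_lt hpa⟩
      exact hne z hz hz0
    · obtain ⟨z, hz, hz0⟩ := hs.intermediate_value ha hb hf ⟨le_of_lt hpa, le_of_lt hpb⟩
      exact hne z hz hz0
  · exfalso
    rcases mul_eq_zero.mp h with h0 | h0
    · exact hne a ha h0
    · exact hne b hb h0
  · exact h

lemma continuous_snoc_fixed {ν : ℕ} (x' : Fin ν → ℝ) :
    Continuous (fun t : ℝ => (Fin.snoc x' t : Fin (ν + 1) → ℝ)) := by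
  apply continuous_pi
  intro i
  refine Fin.lastCases ?_ ?_ i
  · simp only [Fin.snoc_last]; exact continuous_id
  · intro j; simp only [Fin.snoc_castSucc]; exact continuous_const

lemma continuousOn_snoc_graph {ν : ℕ} {E : Set (Fin ν → ℝ)} {g : (Fin ν → ℝ) → ℝ}
    (hg : ContinuousOn g E) :
    ContinuousOn (fun z => (Fin.snoc z (g z) : Fin (ν + 1) → ℝ)) E := by
  apply continuousOn_pi.mpr
  intro i
  refine Fin.lastCases ?_ ?_ i
  · simp only [Fin.snoc_last]; exact hg
  · intro j; simp only [Fin.snoc_castSucc]; exact (continuous_apply j).continuousOn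

/-- The central inductive lemma: if `c` is a coefficient sequence of exact degree `e ≥ 1`
and `μ ≥ e`, then on no connected component of the nonvanishing set of
`A₁ = Σ c_{k+1} e_k` does `A₀ = Σ c_k e_k` have a (weakly) constant sign. -/
theorem chainQ (e : ℕ) (he : 1 ≤ e) : ∀ (μ : ℕ), e ≤ μ → ∀ (c : ℕ → ℝ), c e ≠ 0 →
    (∀ k, e < k → c k = 0) → ∀ (x : Fin μ → ℝ), chainF (fun k => c (k + 1)) x ≠ 0 →
    ∀ (σ : ℝ), (σ = 1 ∨ σ = -1) →
    ¬ (∀ y ∈ connectedComponentIn {z : Fin μ → ℝ | chainF (fun k => c (k + 1)) z ≠ 0} x,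
        0 ≤ σ * chainF c y) := by
  induction e, he using Nat.le_induction with
  | base =>
      intro μ hμ c hc1 fhigh x hx σ hσ Hcon
      have hA1 : ∀ z : Fin μ → ℝ, chainF (fun k => c (k + 1)) z = c 1 := by
        intro z
        rw [chainF, Finset.sum_eq_single 0]
        · rw [esymmFun_zero]; ring
        · intro k _ hk0
          have hck : c (k + 1) = 0 := fhigh (k + 1) (by omega)
          rw [hck]; ring
        · intro h; exact absurd (Finset.mem_range.mpr (by omega)) h
      have hF : ∀ s : ℝ, chainF c (fun _ : Fin μ => s) = c 0 + c 1 * ((μ : ℝ) * s) := by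
        intro s
        rw [chainF]
        have hsub : ({0, 1} : Finset ℕ) ⊆ Finset.range (μ + 1) := by
          intro k hk
          simp only [Finset.mem_insert, Finset.mem_singleton] at hk
          rcases hk with rfl | rfl <;> exact Finset.mem_range.mpr (by omega)
        rw [← Finset.sum_subset hsub ?h0]
        case h0 =>
          intro k _ hknot
          simp only [Finset.mem_insert, Finset.mem_singleton, not_or] at hknot
          have hck : c k = 0 := fhigh k (by omega)
          rw [hck]; ring
        rw [Finset.sum_pair (by norm_num : (0:ℕ) ≠ 1), esymmFun_zero, esymmFun_one]
        simp only [Finset.sum_const, Finset.card_univ, Fintype.card_fin, nsmul_eq_mul]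
        ring
      have hμ0 : (μ : ℝ) ≠ 0 := Nat.cast_ne_zero.mpr (by omega)
      set s0 : ℝ := (-σ - c 0) / (c 1 * (μ : ℝ)) with hs0
      have hval : chainF c (fun _ : Fin μ => s0) = -σ := by
        rw [hF, hs0]
        field_simp
        ring
      have hy : (fun _ : Fin μ => s0) ∈
          connectedComponentIn {z : Fin μ → ℝ | chainF (fun k => c (k + 1)) z ≠ 0} x := by
        have huniv : {z : Fin μ → ℝ | chainF (fun k => c (k + 1)) z ≠ 0} = Set.univ := by
          ext z
          simp only [Set.mem_setOf_eq, Set.mem_univ, iff_true]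
          rw [hA1 z]; exact hc1
        refine isPreconnected_univ.subset_connectedComponentIn (Set.mem_univ x) ?_ (Set.mem_univ _)
        rw [huniv]
      have hcon := Hcon _ hy
      rw [hval] at hcon
      rcases hσ with h | h <;> rw [h] at hcon <;> norm_num at hcon
  | succ e he ihQ =>
      intro μ hμ c hce fhigh x hx σ hσ Hcon
      obtain ⟨ν, rfl⟩ : ∃ ν, μ = ν + 1 := ⟨μ - 1, by omega⟩
      -- abbreviations
      set c1 : ℕ → ℝ := fun k => c (k + 1) with hc1def
      set c2 : ℕ → ℝ := fun k => c1 (k + 1) with hc2def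
      set x' : Fin ν → ℝ := Fin.init x with hx'def
      set τ : ℝ := x (Fin.last ν) with hτdef
      have hxsnoc : (Fin.snoc x' τ : Fin (ν + 1) → ℝ) = x := Fin.snoc_init_self x
      have hA1x : chainF c1 x = chainF c1 x' + τ * chainF c2 x' := by
        conv_lhs => rw [← hxsnoc]
        exact chainF_snoc c1 x' τ
      set D := connectedComponentIn {z : Fin (ν + 1) → ℝ | chainF c1 z ≠ 0} x with hDdef
      have hxD : x ∈ D := mem_connectedComponentIn hx
      have hσne : σ ≠ 0 := by rcases hσ with h | h <;> rw [h] <;> norm_num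
      -- Step 1 : B₂ x' ≠ 0
      have hB2x' : chainF c2 x' ≠ 0 := by
        intro hB2
        have hA1line : ∀ t : ℝ, chainF c1 (Fin.snoc x' t : Fin (ν+1) → ℝ) = chainF c1 x := by
          intro t
          rw [chainF_snoc c1 x' t, ← hc2def, hB2, mul_zero, add_zero, hA1x, hB2, mul_zero, add_zero]
        have hpre : IsPreconnected (Set.range fun t : ℝ => (Fin.snoc x' t : Fin (ν+1) → ℝ)) := by
          rw [← Set.image_univ]
          exact isPreconnected_univ.image _ (continuous_snoc_fixed x').continuousOn
        have hsubr : Set.range (fun t : ℝ => (Fin.snoc x' t : Fin (ν+1) → ℝ))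
            ⊆ {z : Fin (ν+1) → ℝ | chainF c1 z ≠ 0} := by
          rintro p ⟨t, rfl⟩
          simp only [Set.mem_setOf_eq]
          rw [hA1line t]; exact hx
        have hmemr : x ∈ Set.range (fun t : ℝ => (Fin.snoc x' t : Fin (ν+1) → ℝ)) := ⟨τ, hxsnoc⟩
        have hlineD : ∀ t : ℝ, (Fin.snoc x' t : Fin (ν+1) → ℝ) ∈ D :=
          fun t => hpre.subset_connectedComponentIn hmemr hsubr ⟨t, rfl⟩
        have hA0line : ∀ t : ℝ, 0 ≤ σ * chainF c x' + t * (σ * chainF c1 x') := by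
          intro t
          have h1 := Hcon _ (hlineD t)
          rw [chainF_snoc c x' t, ← hc1def] at h1
          nlinarith [h1]
        have hz := slope_zero_of_forall hA0line
        have hB1x' : chainF c1 x' = 0 := by
          rcases hσ with h | h <;> rw [h] at hz <;> linarith
        apply hx
        rw [hA1x, hB2, hB1x']; ring
      -- Step 2 : the component downstairs
      set E := connectedComponentIn {z : Fin ν → ℝ | chainF c2 z ≠ 0} x' with hEdef
      have hx'E : x' ∈ E := mem_connectedComponentIn hB2x'
      have hEsub : E ⊆ {z : Fin ν → ℝ | chainF c2 z ≠ 0} := connectedComponentIn_subset _ _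
      have hEpre : IsPreconnected E := isPreconnected_connectedComponentIn
      -- Step 3 : lifting claim
      have claimL : ∀ z ∈ E, ∀ t : ℝ,
          0 < (chainF c1 z + t * chainF c2 z) * chainF c1 x → (Fin.snoc z t : Fin (ν+1) → ℝ) ∈ D := by
        set A1x := chainF c1 x with hA1xdef
        have hA1xsq : 0 < A1x * A1x := mul_self_pos.mpr hx
        set ell : (Fin ν → ℝ) → ℝ := fun z => (A1x - chainF c1 z) / chainF c2 z with helldef
        have hell : ∀ z ∈ E, chainF c1 z + ell z * chainF c2 z = A1x := by
          intro z hz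
          have hz2 : chainF c2 z ≠ 0 := hEsub hz
          rw [helldef]
          field_simp
          ring
        set G := (fun z => (Fin.snoc z (ell z) : Fin (ν+1) → ℝ)) '' E with hGdef
        have hGpre : IsPreconnected G := by
          apply hEpre.image
          apply continuousOn_snoc_graph
          exact (continuousOn_const.sub (continuous_chainF c1).continuousOn).div
            (continuous_chainF c2).continuousOn (fun z hz => hEsub hz)
        have hIpre : ∀ z : Fin ν → ℝ,
            IsPreconnected {t : ℝ | 0 < (chainF c1 z + t * chainF c2 z) * A1x} := by
          intro z
          apply Set.OrdConnected.isPreconnected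
          constructor
          intro t1 h1 t2 h2 t ht
          simp only [Set.mem_setOf_eq] at h1 h2 ⊢
          rcases le_or_gt 0 (chainF c2 z * A1x) with hq | hq
          · nlinarith [mul_nonneg (sub_nonneg.mpr ht.1) hq]
          · nlinarith [mul_nonneg (sub_nonneg.mpr ht.2) (le_of_lt (neg_pos.mpr hq))]
        have hSU : ∀ z ∈ E, IsPreconnected
            (((fun t => (Fin.snoc z t : Fin (ν+1) → ℝ)) ''
              {t : ℝ | 0 < (chainF c1 z + t * chainF c2 z) * A1x}) ∪ G) := by
          intro z hz
          apply IsPreconnected.union (Fin.snoc z (ell z))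
          · refine Set.mem_image_of_mem _ ?_
            simp only [Set.mem_setOf_eq]
            rw [hell z hz]
            exact hA1xsq
          · exact Set.mem_image_of_mem _ hz
          · exact (hIpre z).image _ (continuous_snoc_fixed z).continuousOn
          · exact hGpre
        set Λ := ⋃ z ∈ E, (((fun t => (Fin.snoc z t : Fin (ν+1) → ℝ)) ''
            {t : ℝ | 0 < (chainF c1 z + t * chainF c2 z) * A1x}) ∪ G) with hΛdef
        have hΛpre : IsPreconnected Λ := by
          rw [hΛdef, ← Set.sUnion_image]
          apply isPreconnected_sUnion (Fin.snoc x' (ell x'))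
          · rintro S ⟨z, hz, rfl⟩
            exact Or.inr (Set.mem_image_of_mem _ hx'E)
          · rintro S ⟨z, hz, rfl⟩
            exact hSU z hz
        have hΛsub : Λ ⊆ {z : Fin (ν+1) → ℝ | chainF c1 z ≠ 0} := by
          intro p hp
          simp only [hΛdef, Set.mem_iUnion] at hp
          obtain ⟨z, hz, hp⟩ := hp
          rcases hp with ⟨t, ht, rfl⟩ | ⟨w, hw, rfl⟩
          · simp only [Set.mem_setOf_eq] at ht ⊢
            rw [chainF_snoc c1 z t, ← hc2def]
            intro h0
            rw [h0, zero_mul] at ht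
            exact lt_irrefl 0 ht
          · simp only [Set.mem_setOf_eq]
            rw [chainF_snoc c1 w (ell w), ← hc2def, hell w hw]
            exact hx
        have hxΛ : x ∈ Λ := by
          apply Set.mem_biUnion hx'E
          left
          refine ⟨τ, ?_, hxsnoc⟩
          simp only [Set.mem_setOf_eq]
          rw [← hA1x]
          exact hA1xsq
        have hΛD : Λ ⊆ D := hΛpre.subset_connectedComponentIn hxΛ hΛsub
        intro z hz t ht
        exact hΛD (Set.mem_biUnion hz (Or.inl ⟨t, ht, rfl⟩))
      -- Step 4 : sign rule on E
      set σ'' : ℝ := if 0 < chainF c2 x' * chainF c1 x then σ else -σ with hσ''def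
      have hrule : ∀ z ∈ E, 0 ≤ σ'' * chainF c1 z := by
        intro z hz
        have hz2 : chainF c2 z ≠ 0 := hEsub hz
        have hzx' : 0 < chainF c2 z * chainF c2 x' :=
          sign_const_on_preconnected hEpre (continuous_chainF c2).continuousOn
            (fun w hw => hEsub hw) hz hx'E
        have hA0 : ∀ t : ℝ, 0 < (chainF c1 z + t * chainF c2 z) * chainF c1 x →
            0 ≤ σ * chainF c z + t * (σ * chainF c1 z) := by
          intro t ht
          have h1 := Hcon _ (claimL z hz t ht)
          rw [chainF_snoc c z t, ← hc1def] at h1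
          nlinarith [h1]
        set ℓz : ℝ := (chainF c1 x - chainF c1 z) / chainF c2 z with hℓzdef
        have hgoodℓ : chainF c1 z + ℓz * chainF c2 z = chainF c1 x := by
          rw [hℓzdef]; field_simp; ring
        have hxsq : 0 < chainF c1 x * chainF c1 x := mul_self_pos.mpr hx
        rcases lt_or_gt_of_ne (mul_ne_zero hz2 hx : chainF c2 z * chainF c1 x ≠ 0) with hneg | hpos
        · have hle : ∀ t, t ≤ ℓz → 0 ≤ σ * chainF c z + t * (σ * chainF c1 z) := by
            intro t htt
            apply hA0
            have hrw : (chainF c1 z + t * chainF c2 z) * chainF c1 x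
                = chainF c1 x * chainF c1 x + (ℓz - t) * (-(chainF c2 z * chainF c1 x)) := by
              rw [← hgoodℓ]; ring
            rw [hrw]
            nlinarith [mul_nonneg (sub_nonneg.mpr htt) (le_of_lt (neg_pos.mpr hneg))]
          have hs := slope_nonpos_of_forall_le hle
          have hcond : chainF c2 x' * chainF c1 x < 0 := by
            nlinarith [hzx', hneg]
          rw [hσ''def, if_neg (not_lt.mpr (le_of_lt hcond))]
          nlinarith [hs]
        · have hge : ∀ t, ℓz ≤ t → 0 ≤ σ * chainF c z + t * (σ * chainF c1 z) := by
            intro t htt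
            apply hA0
            have hrw : (chainF c1 z + t * chainF c2 z) * chainF c1 x
                = chainF c1 x * chainF c1 x + (t - ℓz) * (chainF c2 z * chainF c1 x) := by
              rw [← hgoodℓ]; ring
            rw [hrw]
            nlinarith [mul_nonneg (sub_nonneg.mpr htt) (le_of_lt hpos)]
          have hs := slope_nonneg_of_forall_ge hge
          have hcond : 0 < chainF c2 x' * chainF c1 x := by
            nlinarith [hzx', hpos]
          rw [hσ''def, if_pos hcond]
          exact hs
      -- Step 5 : contradiction with the inductive hypothesis
      exact ihQ ν (by omega) c1 hce (fun k hk => fhigh (k+1) (by omega)) x' hB2x' σ''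
        (by rcases hσ with h | h <;> rw [hσ''def, h] <;> split <;> norm_num)
        (fun y hy => hrule y hy)

theorem exists_coeffs (n d : ℕ) (hd : 1 ≤ d) (P : MvPolynomial (Fin n) ℝ)
    (hma : ∀ i : Fin n, P.degreeOf i ≤ 1) (hsym : P.IsSymmetric) (hdeg : P.totalDegree = d) :
    ∃ c : ℕ → ℝ, c d ≠ 0 ∧ (∀ k, d < k → c k = 0) ∧
      ∀ y : Fin n → ℝ, MvPolynomial.eval y P = chainF c y := by
  classical
  have hsf : ∀ u ∈ P.support, ∀ i, u i ≤ 1 := by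
    intro u hu i
    have h2 := (MvPolynomial.degreeOf_lt_iff (by norm_num : (0:ℕ) < 2)).mp
      (lt_of_le_of_lt (hma i) (by norm_num))
    exact Nat.lt_succ_iff.mp (h2 u hu)
  set uS : Finset (Fin n) → (Fin n →₀ ℕ) := fun S => ∑ i ∈ S, Finsupp.single i 1 with huSdef
  have huS_apply : ∀ S (i : Fin n), uS S i = if i ∈ S then 1 else 0 := by
    intro S i
    rw [huSdef]
    rw [Finsupp.finset_sum_apply]
    simp only [Finsupp.single_apply]
    exact Finset.sum_ite_eq' S i (fun _ => 1)
  have huS_support : ∀ S, (uS S).support = S := by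
    intro S
    ext i
    rw [Finsupp.mem_support_iff, huS_apply]
    split <;> simp_all
  have huS_inj : Function.Injective uS := by
    intro S T h
    rw [← huS_support S, ← huS_support T, h]
  have hu_eq : ∀ u ∈ P.support, u = uS u.support := by
    intro u hu
    ext i
    rw [huS_apply]
    by_cases h : i ∈ u.support
    · rw [if_pos h]
      have h1 : u i ≠ 0 := Finsupp.mem_support_iff.mp h
      have h2 := hsf u hu i
      omega
    · rw [if_neg h]
      exact Finsupp.notMem_support_iff.mp h
  have huS_degsum : ∀ S : Finset (Fin n), ((uS S).sum fun _ e => e) = S.card := by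
    intro S
    rw [Finsupp.sum, huS_support S]
    calc ∑ i ∈ S, uS S i = ∑ _i ∈ S, 1 :=
          Finset.sum_congr rfl fun i hi => by rw [huS_apply, if_pos hi]
      _ = S.card := by simp
  -- symmetry: the coefficient only depends on the cardinality
  have hcard_coeff : ∀ S T : Finset (Fin n), S.card = T.card →
      MvPolynomial.coeff (uS S) P = MvPolynomial.coeff (uS T) P := by
    intro S T hST
    have hccS : Fintype.card {i // i ∈ S} = Fintype.card {i // i ∈ T} := by
      simpa [Fintype.card_coe] using hST
    have hccC : Fintype.card {i : Fin n // ¬ i ∈ S} = Fintype.card {i : Fin n // ¬ i ∈ T} := by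
      rw [Fintype.card_subtype_compl, Fintype.card_subtype_compl, hccS]
    set eS := Fintype.equivOfCardEq hccS with heS
    set eC := Fintype.equivOfCardEq hccC with heC
    set σp : Equiv.Perm (Fin n) :=
      ((Equiv.sumCompl (· ∈ S)).symm.trans ((eS.sumCongr eC).trans (Equiv.sumCompl (· ∈ T))))
      with hσp
    have hmaps : ∀ i ∈ S, σp i ∈ T := by
      intro i hi
      rw [hσp]
      simp only [Equiv.trans_apply]
      rw [Equiv.sumCompl_symm_apply_of_pos (p := (· ∈ S)) hi]
      rw [Equiv.sumCongr_apply, Sum.map_inl, Equiv.sumCompl_apply_inl]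
      exact (eS ⟨i, hi⟩).2
    have himg : S.image σp = T := by
      apply Finset.eq_of_subset_of_card_le
      · intro j hj
        obtain ⟨i, hi, rfl⟩ := Finset.mem_image.mp hj
        exact hmaps i hi
      · rw [Finset.card_image_of_injective _ σp.injective, hST]
    have hco := MvPolynomial.coeff_rename_mapDomain σp σp.injective P (uS S)
    rw [hsym σp] at hco
    have hmapd : Finsupp.mapDomain σp (uS S) = uS T := by
      rw [huSdef]
      rw [Finsupp.mapDomain_finset_sum]
      simp only [Finsupp.mapDomain_single]
      rw [← himg, Finset.sum_image (fun a _ b _ hab => σp.injective hab)]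
    rw [hmapd] at hco
    exact hco.symm
  -- the coefficient sequence
  set c : ℕ → ℝ := fun k =>
    if hk : k ≤ n then
      MvPolynomial.coeff (uS (Finset.attachFin (Finset.range k)
        (fun m hm => lt_of_lt_of_le (Finset.mem_range.mp hm) hk))) P
    else 0 with hcdef
  have hcanon_card : ∀ (k : ℕ) (hk : k ≤ n),
      (Finset.attachFin (Finset.range k)
        (fun m hm => lt_of_lt_of_le (Finset.mem_range.mp hm) hk)).card = k := by
    intro k hk
    rw [Finset.card_attachFin, Finset.card_range]
  have hcS : ∀ S : Finset (Fin n), MvPolynomial.coeff (uS S) P = c S.card := by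
    intro S
    have hSn : S.card ≤ n := by
      simpa using Finset.card_le_univ S
    rw [hcdef]
    dsimp only
    rw [dif_pos hSn]
    exact hcard_coeff S _ (by rw [hcanon_card _ hSn])
  refine ⟨c, ?_, ?_, ?_⟩
  · -- c d ≠ 0
    have hPne : P ≠ 0 := by
      intro h0
      rw [h0, MvPolynomial.totalDegree_zero] at hdeg
      omega
    have hsupne : P.support.Nonempty := by
      rw [Finset.nonempty_iff_ne_empty]
      intro h
      exact hPne (MvPolynomial.support_eq_empty.mp h)
    obtain ⟨u, hmem, heq⟩ := Finset.exists_mem_eq_sup P.support hsupne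
      (fun u : Fin n →₀ ℕ => u.sum fun _ e => e)
    have hud : (u.sum fun _ e => e) = d := by
      rw [← hdeg, MvPolynomial.totalDegree, heq]
    have hcardd : u.support.card = d := by
      have h1 := huS_degsum u.support
      rw [← hu_eq u hmem] at h1
      rw [← h1, hud]
    have : MvPolynomial.coeff u P ≠ 0 := MvPolynomial.mem_support_iff.mp hmem
    rw [hu_eq u hmem, hcS, hcardd] at this
    exact this
  · -- vanishing above degree d
    intro k hk
    rw [hcdef]
    dsimp only
    split
    · rename_i hkn
      by_contra hc0
      have hmem : uS (Finset.attachFin (Finset.range k)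
          (fun m hm => lt_of_lt_of_le (Finset.mem_range.mp hm) hkn)) ∈ P.support :=
        MvPolynomial.mem_support_iff.mpr hc0
      have hle := MvPolynomial.le_totalDegree hmem
      rw [huS_degsum, hcanon_card _ hkn, hdeg] at hle
      omega
    · rfl
  · -- the evaluation identity
    intro y
    rw [MvPolynomial.eval_eq']
    have hsubim : P.support ⊆ (Finset.univ.powerset).image uS := by
      intro u hu
      exact Finset.mem_image.mpr
        ⟨u.support, Finset.mem_powerset.mpr (Finset.subset_univ _), (hu_eq u hu).symm⟩
    rw [Finset.sum_subset hsubim ?hzero]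
    case hzero =>
      intro u _ hunot
      rw [MvPolynomial.notMem_support_iff.mp hunot]
      ring
    rw [Finset.sum_image (fun a _ b _ hab => huS_inj hab)]
    have hterm : ∀ S : Finset (Fin n), (∏ i, y i ^ (uS S) i) = ∏ i ∈ S, y i := by
      intro S
      calc ∏ i, y i ^ (uS S) i = ∏ i, (if i ∈ S then y i else 1) := by
            apply Finset.prod_congr rfl
            intro i _
            rw [huS_apply]
            split <;> simp
        _ = ∏ i ∈ Finset.univ ∩ S, y i := Finset.prod_ite_mem _ _ _
        _ = ∏ i ∈ S, y i := by rw [Finset.univ_inter]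
    rw [Finset.sum_powerset, chainF]
    rw [show (Finset.univ : Finset (Fin n)).card = n from by simp]
    apply Finset.sum_congr rfl
    intro k _
    rw [esymmFun_eq_sum, Finset.mul_sum]
    apply Finset.sum_congr rfl
    intro S hS
    rw [hterm S, hcS S, (Finset.mem_powersetCard.mp hS).2]


end

end AuxConnectedComponents

/-- For `d ≥ 1` and `n ≥ 2^(d-1) + 1`, every connected component of the zero set of a
symmetric multi-affine polynomial of degree `d` in `n` variables intersects the
hyperplane `{x : x_n = 0}`. -/
theorem components_meet_hyperplane (d n : ℕ) (hd : 1 ≤ d) (hn : 2 ^ (d - 1) + 1 ≤ n)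
    (P : MvPolynomial (Fin n) ℝ)
    (hma : ∀ i : Fin n, P.degreeOf i ≤ 1)
    (hsym : P.IsSymmetric)
    (hdeg : P.totalDegree = d) :
    ∀ x ∈ {y : Fin n → ℝ | eval y P = 0},
      ∃ y ∈ connectedComponentIn {y : Fin n → ℝ | eval y P = 0} x,
        y ⟨n - 1, Nat.sub_lt (Nat.lt_of_lt_of_le (Nat.succ_pos _) hn) Nat.one_pos⟩ = 0 := by
  intro x hx
  have hd2 : d ≤ 2 ^ (d - 1) := by
    have h := Nat.lt_two_pow_self (n := d - 1)
    omega
  obtain ⟨m, rfl⟩ : ∃ m, n = m + 1 := ⟨n - 1, by omega⟩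
  have hdm : d ≤ m := by omega
  obtain ⟨c, hcd, hchigh, hrep⟩ := exists_coeffs (m + 1) d hd P hma hsym hdeg
  have hidx : ∀ (h : m + 1 - 1 < m + 1), (⟨m + 1 - 1, h⟩ : Fin (m + 1)) = Fin.last m := by
    intro h
    apply Fin.ext
    simp
  set x' : Fin m → ℝ := Fin.init x with hx'def
  set τ : ℝ := x (Fin.last m) with hτdef
  have hxs : (Fin.snoc x' τ : Fin (m + 1) → ℝ) = x := Fin.snoc_init_self x
  have hPsnoc : ∀ (z : Fin m → ℝ) (t : ℝ),
      MvPolynomial.eval (Fin.snoc z t : Fin (m + 1) → ℝ) P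
        = chainF c z + t * chainF (fun k => c (k + 1)) z := by
    intro z t
    rw [hrep, chainF_snoc]
  have hx0 : chainF c x' + τ * chainF (fun k => c (k + 1)) x' = 0 := by
    rw [← hPsnoc, hxs]
    exact hx
  by_cases hA : chainF (fun k => c (k + 1)) x' = 0
  · -- the whole vertical line lies in the zero set
    have hB : chainF c x' = 0 := by
      rw [hA, mul_zero, add_zero] at hx0
      exact hx0
    have hline : ∀ t : ℝ,
        (Fin.snoc x' t : Fin (m + 1) → ℝ) ∈ {y : Fin (m + 1) → ℝ | eval y P = 0} := by
      intro t
      simp only [Set.mem_setOf_eq]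
      rw [hPsnoc, hA, hB, mul_zero, add_zero]
    have hpre : IsPreconnected (Set.range fun t : ℝ => (Fin.snoc x' t : Fin (m + 1) → ℝ)) := by
      rw [← Set.image_univ]
      exact isPreconnected_univ.image _ (continuous_snoc_fixed x').continuousOn
    have hsubr : Set.range (fun t : ℝ => (Fin.snoc x' t : Fin (m + 1) → ℝ))
        ⊆ {y : Fin (m + 1) → ℝ | eval y P = 0} := by
      rintro p ⟨t, rfl⟩
      exact hline t
    have hmemr : x ∈ Set.range (fun t : ℝ => (Fin.snoc x' t : Fin (m + 1) → ℝ)) := ⟨τ, hxs⟩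
    refine ⟨Fin.snoc x' 0, ?_, ?_⟩
    · exact hpre.subset_connectedComponentIn hmemr hsubr ⟨0, rfl⟩
    · rw [hidx]
      exact Fin.snoc_last _ _
  · -- generic case : follow the graph of `-B/A` over the component of `x'` in `{A ≠ 0}`
    set C := connectedComponentIn {z : Fin m → ℝ | chainF (fun k => c (k + 1)) z ≠ 0} x' with hCdef
    have h1 := chainQ d hd m hdm c hcd hchigh x' hA 1 (Or.inl rfl)
    have h2 := chainQ d hd m hdm c hcd hchigh x' hA (-1) (Or.inr rfl)
    push_neg at h1 h2
    obtain ⟨y1, hy1C, hy1⟩ := h1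
    obtain ⟨y2, hy2C, hy2⟩ := h2
    have hy1' : chainF c y1 < 0 := by nlinarith [hy1]
    have hy2' : 0 < chainF c y2 := by nlinarith [hy2]
    have hCpre : IsPreconnected C := isPreconnected_connectedComponentIn
    obtain ⟨zhat, hzC, hz0⟩ : ∃ z ∈ C, chainF c z = 0 := by
      have hIVT := hCpre.intermediate_value hy1C hy2C (continuous_chainF c).continuousOn
      obtain ⟨z, hzC, hz0⟩ := hIVT ⟨le_of_lt hy1', le_of_lt hy2'⟩
      exact ⟨z, hzC, hz0⟩
    have hCsub : C ⊆ {z : Fin m → ℝ | chainF (fun k => c (k + 1)) z ≠ 0} :=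
      connectedComponentIn_subset _ _
    set g : (Fin m → ℝ) → (Fin (m + 1) → ℝ) :=
      fun z => Fin.snoc z (-(chainF c z) / chainF (fun k => c (k + 1)) z) with hgdef
    have hgcont : ContinuousOn g C := by
      apply continuousOn_snoc_graph
      exact ((continuous_chainF c).continuousOn.neg).div
        (continuous_chainF (fun k => c (k + 1))).continuousOn (fun z hz => hCsub hz)
    have hgsub : g '' C ⊆ {y : Fin (m + 1) → ℝ | eval y P = 0} := by
      rintro p ⟨z, hz, rfl⟩
      have hz1 : chainF (fun k => c (k + 1)) z ≠ 0 := hCsub hz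
      simp only [hgdef, Set.mem_setOf_eq]
      rw [hPsnoc]
      field_simp
      ring
    have harg : -(chainF c x') / chainF (fun k => c (k + 1)) x' = τ := by
      rw [div_eq_iff hA]
      linarith [hx0]
    have hgx : g x' = x := by
      rw [hgdef]
      dsimp only
      rw [harg, hxs]
    have hgpre : IsPreconnected (g '' C) := hCpre.image _ hgcont
    have hxmem : x ∈ g '' C := ⟨x', mem_connectedComponentIn hA, hgx⟩
    refine ⟨g zhat, ?_, ?_⟩
    · exact hgpre.subset_connectedComponentIn hxmem hgsub ⟨zhat, hzC, rfl⟩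
    · rw [hgdef]
      dsimp only
      rw [hz0, hidx]
      rw [Fin.snoc_last]
      simp
end

section
/- Let n ≥ 3 and let x = (x₁,…,x_n) ∈ ℝ^n satisfy x₁ + ⋯ + x_n = 0. Then (x₁³ + ⋯ + x_n³)² ≤ ((n−2)²/(n(n−1)))·(x₁² + ⋯ + x_n²)³. -/
/-- Quartic power-sum bound: if `∑ x i = 0` and `n ≥ 3`, then
`n(n-1) ∑ x i ^ 4 ≤ (n² - 3n + 3) (∑ x i ^ 2)²`. -/
theorem quartic_power_sum (n : ℕ) (hn : 3 ≤ n) (x : Fin n → ℝ)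
    (hx : ∑ i, x i = 0) :
    (n : ℝ) * ((n : ℝ) - 1) * (∑ i, x i ^ 4)
      ≤ ((n : ℝ) ^ 2 - 3 * (n : ℝ) + 3) * (∑ i, x i ^ 2) ^ 2 := by
  set N : ℝ := (n : ℝ) with hN
  set s2 : ℝ := ∑ i, x i ^ 2 with hs2
  set s3 : ℝ := ∑ i, x i ^ 3 with hs3
  set s4 : ℝ := ∑ i, x i ^ 4 with hs4
  set a : ℝ := (N - 1) * (N - 2) with ha
  set b : ℝ := N - 1 with hb
  set R : Fin n → Fin n → ℝ :=
    fun i j => a * (x i * x j) + b * (x i ^ 2 + x j ^ 2) - s2 with hR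
  have hcard : ((Finset.univ : Finset (Fin n)).card : ℝ) = N := by simp [hN]
  -- generic evaluation of a sum of a quartic polynomial of the coordinates
  have poly_sum : ∀ c4 c3 c2 c1 c0 : ℝ,
      ∑ i, (c4 * x i ^ 4 + c3 * x i ^ 3 + c2 * x i ^ 2 + c1 * x i + c0)
        = c4 * s4 + c3 * s3 + c2 * s2 + N * c0 := by
    intro c4 c3 c2 c1 c0
    simp only [Finset.sum_add_distrib, ← Finset.mul_sum, ← hs2, ← hs3, ← hs4, hx,
      Finset.sum_const, nsmul_eq_mul, mul_zero]
    rw [hcard]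
    ring
  have inner_sum : ∀ i : Fin n, ∑ j, R i j ^ 2 =
      (N * b ^ 2) * x i ^ 4 + (2 * a * b * s3) * x i
        + (a ^ 2 * s2 - 2 * N * b * s2 + 2 * b ^ 2 * s2) * x i ^ 2
        + (b ^ 2 * s4 + N * s2 ^ 2 - 2 * b * s2 ^ 2) := by
    intro i
    have e : ∀ j : Fin n, R i j ^ 2 =
        b ^ 2 * x j ^ 4 + (2 * a * x i * b) * x j ^ 3
          + (a ^ 2 * x i ^ 2 + 2 * b * (b * x i ^ 2 - s2)) * x j ^ 2
          + (2 * a * x i * (b * x i ^ 2 - s2)) * x j + (b * x i ^ 2 - s2) ^ 2 := by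
      intro j; simp only [hR]; ring
    rw [Finset.sum_congr rfl fun j _ => e j, poly_sum]
    ring
  have total : ∑ i, ∑ j, R i j ^ 2 =
      (N * b ^ 2) * s4 + (a ^ 2 * s2 - 2 * N * b * s2 + 2 * b ^ 2 * s2) * s2
        + N * (b ^ 2 * s4 + N * s2 ^ 2 - 2 * b * s2 ^ 2) := by
    rw [Finset.sum_congr rfl fun i _ => inner_sum i]
    have hp := poly_sum (N * b ^ 2) 0 (a ^ 2 * s2 - 2 * N * b * s2 + 2 * b ^ 2 * s2)
      (2 * a * b * s3) (b ^ 2 * s4 + N * s2 ^ 2 - 2 * b * s2 ^ 2)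
    have e : ∀ i : Fin n,
        N * b ^ 2 * x i ^ 4 + 2 * a * b * s3 * x i
          + (a ^ 2 * s2 - 2 * N * b * s2 + 2 * b ^ 2 * s2) * x i ^ 2
          + (b ^ 2 * s4 + N * s2 ^ 2 - 2 * b * s2 ^ 2)
        = N * b ^ 2 * x i ^ 4 + 0 * x i ^ 3
          + (a ^ 2 * s2 - 2 * N * b * s2 + 2 * b ^ 2 * s2) * x i ^ 2
          + 2 * a * b * s3 * x i + (b ^ 2 * s4 + N * s2 ^ 2 - 2 * b * s2 ^ 2) := by
      intro i; ring
    rw [Finset.sum_congr rfl fun i _ => e i, hp]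
    ring
  have diag : ∑ i, R i i ^ 2 =
      (N * b) ^ 2 * s4 - 2 * N * b * s2 ^ 2 + N * s2 ^ 2 := by
    have e : ∀ i : Fin n, R i i ^ 2 =
        (N * b) ^ 2 * x i ^ 4 + 0 * x i ^ 3 + (- (2 * N * b * s2)) * x i ^ 2
          + 0 * x i + s2 ^ 2 := by
      intro i; simp only [hR, ha, hb]; ring
    rw [Finset.sum_congr rfl fun i _ => e i, poly_sum]
    ring
  have hpos : 0 ≤ ∑ i, ∑ j, R i j ^ 2 - ∑ i, R i i ^ 2 := by
    have : ∑ i, R i i ^ 2 ≤ ∑ i, ∑ j, R i j ^ 2 := by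
      apply Finset.sum_le_sum
      intro i _
      exact Finset.single_le_sum (f := fun j => R i j ^ 2)
        (fun j _ => sq_nonneg _) (Finset.mem_univ i)
    linarith
  have key : ∑ i, ∑ j, R i j ^ 2 - ∑ i, R i i ^ 2
      = (N - 1) * (N - 2) * ((N ^ 2 - 3 * N + 3) * s2 ^ 2 - N * (N - 1) * s4) := by
    rw [total, diag, ha, hb]; ring
  have hN3 : (3 : ℝ) ≤ N := by rw [hN]; exact_mod_cast hn
  have hfac : 0 < (N - 1) * (N - 2) := by nlinarith
  have hE : 0 ≤ (N ^ 2 - 3 * N + 3) * s2 ^ 2 - N * (N - 1) * s4 := by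
    rw [key] at hpos
    by_contra h
    push_neg at h
    nlinarith [hpos, hfac]
  rw [hb]
  linarith

/-- If `x₁ + ⋯ + x_n = 0` with `n ≥ 3`, then
`(x₁³ + ⋯ + x_n³)² ≤ ((n-2)²/(n(n-1))) (x₁² + ⋯ + x_n²)³`. -/
theorem power_sum_inequality (n : ℕ) (hn : 3 ≤ n) (x : Fin n → ℝ)
    (hx : ∑ i, x i = 0) :
    (∑ i, x i ^ 3) ^ 2
      ≤ ((n : ℝ) - 2) ^ 2 / ((n : ℝ) * ((n : ℝ) - 1)) * (∑ i, x i ^ 2) ^ 3 := by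
  set N : ℝ := (n : ℝ) with hN
  set s2 : ℝ := ∑ i, x i ^ 2 with hs2
  set s3 : ℝ := ∑ i, x i ^ 3 with hs3
  set s4 : ℝ := ∑ i, x i ^ 4 with hs4
  have hN3 : (3 : ℝ) ≤ N := by rw [hN]; exact_mod_cast hn
  have hNpos : 0 < N * (N - 1) := by nlinarith
  have hs2nn : 0 ≤ s2 := Finset.sum_nonneg fun i _ => sq_nonneg _
  have hcard : ((Finset.univ : Finset (Fin n)).card : ℝ) = N := by simp [hN]
  -- Cauchy–Schwarz with f = x, g = x² − s2/N
  have cauchy : s3 ^ 2 ≤ s2 * (s4 - s2 ^ 2 / N) := by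
    have h := Finset.sum_mul_sq_le_sq_mul_sq Finset.univ (fun i => x i)
      (fun i => x i ^ 2 - s2 / N)
    have hL : ∑ i, x i * (x i ^ 2 - s2 / N) = s3 := by
      simp only [mul_sub]
      rw [Finset.sum_sub_distrib, ← Finset.sum_mul, hx]
      have : ∑ i, x i * x i ^ 2 = s3 := by
        rw [hs3]; exact Finset.sum_congr rfl fun i _ => by ring
      rw [this]; ring
    have hR2 : ∑ i, (x i ^ 2 - s2 / N) ^ 2 = s4 - s2 ^ 2 / N := by
      have e : ∀ i : Fin n, (x i ^ 2 - s2 / N) ^ 2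
          = x i ^ 4 - (2 * s2 / N) * x i ^ 2 + (s2 / N) ^ 2 := fun i => by ring
      rw [Finset.sum_congr rfl fun i _ => e i]
      simp only [Finset.sum_add_distrib, Finset.sum_sub_distrib, ← Finset.mul_sum,
        ← hs2, ← hs4, Finset.sum_const, nsmul_eq_mul]
      rw [hcard]
      field_simp
      ring
    have hf2 : ∑ i, x i ^ 2 = s2 := rfl
    rw [hL, hf2, hR2] at h
    exact h
  have quartic := quartic_power_sum n hn x hx
  rw [← hs2, ← hs4, ← hN] at quartic
  -- combine: s4 - s2²/N ≤ (N-2)²/(N(N-1)) · s2²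
  have h2 : s4 - s2 ^ 2 / N ≤ (N - 2) ^ 2 / (N * (N - 1)) * s2 ^ 2 := by
    rw [div_mul_eq_mul_div, le_div_iff₀ hNpos, sub_mul]
    have hNne : N ≠ 0 := by nlinarith
    have : s2 ^ 2 / N * (N * (N - 1)) = s2 ^ 2 * (N - 1) := by
      field_simp
    rw [this]
    nlinarith [quartic]
  calc s3 ^ 2 ≤ s2 * (s4 - s2 ^ 2 / N) := cauchy
    _ ≤ s2 * ((N - 2) ^ 2 / (N * (N - 1)) * s2 ^ 2) := by
        apply mul_le_mul_of_nonneg_left h2 hs2nn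
    _ = (N - 2) ^ 2 / (N * (N - 1)) * s2 ^ 3 := by ring
end

section
/- Let n ≥ 3 and let x ∈ ℝ^n satisfy x₁ + ⋯ + x_n = 0. Then 4·((n−2)/2·(x₁² + ⋯ + x_n²) + n)³ − 3·binom(n,3)·(x₁³ + ⋯ + x_n³)² > 0. Equivalently, the cubic polynomial g_x(t) = binom(n,3)·t³ − ((n−2)/2·N₂(x) + n)·t + N₃(x)/3 ∈ ℝ[t] has positive discriminant, and hence three distinct real roots. -/
open Finset

lemma onesided (n : ℕ) (hn : 3 ≤ n) (S m : ℝ) (hSpos : 0 < S)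
    (hm : m = Real.sqrt (S / (n * ((n:ℝ)-1)))) (y : Fin n → ℝ)
    (hy : ∑ i, y i = 0) (hyS : ∑ i, y i ^ 2 = S) :
    ∑ i, y i ^ 3 ≤ ((n:ℝ) - 2) * m * S := by
  have hn3 : (3:ℝ) ≤ (n:ℝ) := by exact_mod_cast hn
  have hnn : (0:ℝ) < (n:ℝ) * ((n:ℝ) - 1) := by nlinarith
  have hm0 : 0 < m := by
    rw [hm]; exact Real.sqrt_pos.2 (div_pos hSpos hnn)
  have hm2 : m ^ 2 = S / ((n:ℝ) * ((n:ℝ)-1)) := by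
    rw [hm, Real.sq_sqrt (le_of_lt (div_pos hSpos hnn))]
  have hm2' : (n:ℝ) * ((n:ℝ)-1) * m ^ 2 = S := by
    rw [hm2, mul_comm, div_mul_cancel₀ _ hnn.ne']
  set M : ℝ := ((n:ℝ) - 1) * m with hM
  have hMpos : 0 < M := mul_pos (by linarith) hm0
  have hcoord : ∀ i, y i ≤ M := by
    intro i
    have herase : y i + ∑ j ∈ univ.erase i, y j = ∑ j, y j :=
      Finset.add_sum_erase univ y (mem_univ i)
    have hCS : (∑ j ∈ univ.erase i, y j) ^ 2 ≤
        ((univ.erase i).card : ℝ) * ∑ j ∈ univ.erase i, (y j) ^ 2 :=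
      sq_sum_le_card_mul_sum_sq
    have hcard : ((univ.erase i).card : ℝ) = (n:ℝ) - 1 := by
      rw [Finset.card_erase_of_mem (mem_univ i), Finset.card_univ, Fintype.card_fin]
      push_cast [Nat.cast_sub (by omega : 1 ≤ n)]
      ring
    have hsum2 : y i ^ 2 + ∑ j ∈ univ.erase i, (y j) ^ 2 = ∑ j, y j ^ 2 :=
      Finset.add_sum_erase univ (fun j => y j ^ 2) (mem_univ i)
    have h1 : (∑ j ∈ univ.erase i, y j) = - y i := by rw [hy] at herase; linarith
    rw [h1, hcard] at hCS
    have h2 : ∑ j ∈ univ.erase i, (y j) ^ 2 = S - y i ^ 2 := by rw [hyS] at hsum2; linarith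
    rw [h2] at hCS
    have hM2 : (n:ℝ) * M ^ 2 = ((n:ℝ) - 1) * S := by rw [hM]; nlinarith [hm2']
    have hyi2 : y i ^ 2 ≤ M ^ 2 := by nlinarith
    nlinarith [hyi2, hMpos]
  have hpt : ∀ i, y i ^ 3 ≤ (M - 2*m) * y i ^ 2 + (2*m*M - m^2) * y i + m^2 * M := by
    intro i
    nlinarith [mul_nonneg (sq_nonneg (y i + m)) (sub_nonneg.2 (hcoord i))]
  calc ∑ i, y i ^ 3 ≤ ∑ i, ((M - 2*m) * y i ^ 2 + (2*m*M - m^2) * y i + m^2 * M) :=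
        Finset.sum_le_sum fun i _ => hpt i
    _ = (M - 2*m) * S + (2*m*M - m^2) * 0 + (n:ℝ) * (m^2 * M) := by
        rw [Finset.sum_add_distrib, Finset.sum_add_distrib, ← Finset.mul_sum, ← Finset.mul_sum,
          hyS, hy, Finset.sum_const, Finset.card_univ, Fintype.card_fin, nsmul_eq_mul]
    _ = ((n:ℝ) - 2) * m * S := by rw [hM]; nlinarith [hm2']

lemma key_ineq (n : ℕ) (hn : 3 ≤ n) (x : Fin n → ℝ) (hx : ∑ i, x i = 0) :
    (n:ℝ) * ((n:ℝ) - 1) * (∑ i, x i ^ 3) ^ 2 ≤ ((n:ℝ) - 2) ^ 2 * (∑ i, x i ^ 2) ^ 3 := by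
  have hn3 : (3:ℝ) ≤ (n:ℝ) := by exact_mod_cast hn
  have hnn : (0:ℝ) < (n:ℝ) * ((n:ℝ) - 1) := by nlinarith
  set S := ∑ i, x i ^ 2 with hS
  have hS0 : 0 ≤ S := Finset.sum_nonneg fun i _ => sq_nonneg _
  rcases eq_or_lt_of_le hS0 with h0 | hSpos
  · have hall : ∀ i ∈ (univ : Finset (Fin n)), x i ^ 2 = 0 := by
      rw [← Finset.sum_eq_zero_iff_of_nonneg (fun i _ => sq_nonneg (x i))]
      exact h0.symm
    have h3 : ∑ i, x i ^ 3 = 0 := Finset.sum_eq_zero fun i _ => by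
      have hx0 : x i = 0 := by
        have h := hall i (mem_univ i)
        exact pow_eq_zero_iff two_ne_zero |>.mp h
      simp [hx0]
    rw [h3, ← h0]; norm_num
  · set m := Real.sqrt (S / (n * ((n:ℝ)-1))) with hm
    have hpos : ∑ i, x i ^ 3 ≤ ((n:ℝ) - 2) * m * S :=
      onesided n hn S m hSpos hm x hx rfl
    have hyneg : ∑ i, (fun i => - x i) i = 0 := by simp [hx]
    have hsq : ∀ a : ℝ, (-a)^2 = a^2 := fun a => by ring
    have hcb : ∀ a : ℝ, (-a)^3 = -(a^3) := fun a => by ring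
    have hySneg : ∑ i, (fun i => - x i) i ^ 2 = S := by
      simp only [hsq]
      rfl
    have hneg : -(∑ i, x i ^ 3) ≤ ((n:ℝ) - 2) * m * S := by
      have h := onesided n hn S m hSpos hm (fun i => - x i) hyneg hySneg
      simp only [hcb, Finset.sum_neg_distrib] at h
      exact h
    have hm2 : (n:ℝ) * ((n:ℝ)-1) * m ^ 2 = S := by
      rw [hm, Real.sq_sqrt (le_of_lt (div_pos hSpos hnn)), mul_comm,
        div_mul_cancel₀ _ hnn.ne']
    have hbound : (∑ i, x i ^ 3) ^ 2 ≤ (((n:ℝ) - 2) * m * S) ^ 2 :=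
      sq_le_sq' (by linarith) hpos
    have e : (n:ℝ) * ((n:ℝ)-1) * (((n:ℝ)-2)*m*S)^2 = ((n:ℝ)-2)^2 * S^3 := by
      calc (n:ℝ) * ((n:ℝ)-1) * (((n:ℝ)-2)*m*S)^2
          = ((n:ℝ)-2)^2 * S^2 * ((n:ℝ) * ((n:ℝ)-1) * m^2) := by ring
        _ = ((n:ℝ)-2)^2 * S^3 := by rw [hm2]; ring
    nlinarith [mul_le_mul_of_nonneg_left hbound (le_of_lt hnn), e]

lemma monic_cubic_roots (p q : ℝ) (hp : 0 < p) (hD : 27 * q ^ 2 < 4 * p ^ 3) :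
    ∃ t₁ t₂ t₃ : ℝ, t₁ < t₂ ∧ t₂ < t₃ ∧
      (t₁^3 - p*t₁ + q = 0) ∧ (t₂^3 - p*t₂ + q = 0) ∧ (t₃^3 - p*t₃ + q = 0) := by
  set f : ℝ → ℝ := fun t => t^3 - p*t + q with hf
  have hcont : Continuous f := by continuity
  set r : ℝ := Real.sqrt (p/3) with hr
  have hr0 : 0 < r := Real.sqrt_pos.2 (by linarith)
  have hr2 : r ^ 2 = p / 3 := Real.sq_sqrt (by linarith)
  have hcrit : (2*p/3*r)^2 = 4*p^3/27 := by
    calc (2*p/3*r)^2 = (2*p/3)^2 * r^2 := by ring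
      _ = 4*p^3/27 := by rw [hr2]; ring
  have habs : |q| < 2*p/3*r := by
    have h1 : 0 < 2*p/3*r := by positivity
    have h2 : q^2 < (2*p/3*r)^2 := by rw [hcrit]; linarith
    nlinarith [abs_nonneg q, sq_abs q]
  have hval : ∀ t : ℝ, f t = t^3 - p*t + q := fun t => rfl
  have hfr : f r < 0 := by
    have h3 : f r = q - 2*p/3*r := by
      rw [hval]
      have h4 : r^3 = (p/3) * r := by rw [← hr2]; ring
      rw [h4]; ring
    rw [h3]; linarith [(abs_lt.mp habs).2]
  have hfnr : 0 < f (-r) := by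
    have h3 : f (-r) = q + 2*p/3*r := by
      rw [hval]
      have h4 : (-r)^3 = -((p/3) * r) := by rw [← hr2]; ring
      rw [h4]; ring
    rw [h3]; linarith [(abs_lt.mp habs).1]
  set K : ℝ := 1 + p + |q| + r with hK
  have haq : |q| ≥ q := le_abs_self q
  have haq2 : -q ≤ |q| := neg_le_abs q
  have ha0 : 0 ≤ |q| := abs_nonneg q
  have hK1 : 1 ≤ K := by rw [hK]; linarith
  have hKr : r < K := by rw [hK]; linarith
  have hfK : 0 < f K := by
    rw [hval, hK]
    nlinarith [sq_nonneg (p + |q| + r), mul_nonneg (mul_nonneg ha0 ha0) ha0,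
      mul_nonneg (mul_nonneg hp.le hp.le) hp.le, mul_nonneg hp.le ha0,
      mul_nonneg hr0.le ha0, mul_nonneg hp.le hr0.le, mul_nonneg (mul_nonneg hr0.le hr0.le) hr0.le]
  have hfnK : f (-K) < 0 := by
    rw [hval, hK]
    nlinarith [sq_nonneg (p + |q| + r), mul_nonneg (mul_nonneg ha0 ha0) ha0,
      mul_nonneg (mul_nonneg hp.le hp.le) hp.le, mul_nonneg hp.le ha0,
      mul_nonneg hr0.le ha0, mul_nonneg hp.le hr0.le, mul_nonneg (mul_nonneg hr0.le hr0.le) hr0.le]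
  -- three roots by IVT
  obtain ⟨t₁, ht₁mem, ht₁⟩ := intermediate_value_Icc (by linarith : -K ≤ -r)
    hcont.continuousOn ⟨hfnK.le, hfnr.le⟩
  obtain ⟨t₂, ht₂mem, ht₂⟩ := intermediate_value_Icc' (by linarith : -r ≤ r)
    hcont.continuousOn ⟨hfr.le, hfnr.le⟩
  obtain ⟨t₃, ht₃mem, ht₃⟩ := intermediate_value_Icc (by linarith : r ≤ K)
    hcont.continuousOn ⟨hfr.le, hfK.le⟩
  have h1 : t₁ < -r := lt_of_le_of_ne ht₁mem.2 (fun h => by rw [h] at ht₁; linarith)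
  have h2l : -r < t₂ := lt_of_le_of_ne ht₂mem.1 (fun h => by rw [← h] at ht₂; linarith)
  have h2r : t₂ < r := lt_of_le_of_ne ht₂mem.2 (fun h => by rw [h] at ht₂; linarith)
  have h3 : r < t₃ := lt_of_le_of_ne ht₃mem.1 (fun h => by rw [← h] at ht₃; linarith)
  exact ⟨t₁, t₂, t₃, by linarith, by linarith, ht₁, ht₂, ht₃⟩

lemma six_choose_three (n : ℕ) (hn : 3 ≤ n) :
    (6 : ℝ) * n.choose 3 = n * ((n:ℝ) - 1) * ((n:ℝ) - 2) := by
  have h : 6 * n.choose 3 = (n - 2) * ((n - 1) * (n * 1)) := by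
    have := Nat.descFactorial_eq_factorial_mul_choose n 3
    simp [Nat.descFactorial_succ, Nat.factorial] at this
    simpa [Nat.descFactorial_succ] using this.symm
  have h1 : (1:ℕ) ≤ n := by omega
  have h2 : (2:ℕ) ≤ n := by omega
  calc (6:ℝ) * n.choose 3 = ((6 * n.choose 3 : ℕ) : ℝ) := by push_cast; ring
    _ = (((n-2) * ((n-1) * (n*1)) : ℕ) : ℝ) := by rw [h]
    _ = n * ((n:ℝ) - 1) * ((n:ℝ) - 2) := by push_cast [Nat.cast_sub h1, Nat.cast_sub h2]; ring

/-- If `x₁ + ⋯ + x_n = 0` with `n ≥ 3`, then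
`4 ((n-2)/2 · N₂(x) + n)³ - 3 (n choose 3) N₃(x)² > 0`; equivalently, the cubic
`g_x(t) = (n choose 3) t³ - ((n-2)/2 · N₂(x) + n) t + N₃(x)/3` has positive discriminant
and hence three distinct real roots. -/
theorem cubic_discriminant_positive (n : ℕ) (hn : 3 ≤ n) (x : Fin n → ℝ)
    (hx : ∑ i, x i = 0) :
    0 < 4 * (((n : ℝ) - 2) / 2 * (∑ i, x i ^ 2) + n) ^ 3
        - 3 * (n.choose 3 : ℝ) * (∑ i, x i ^ 3) ^ 2 ∧
      ∃ t₁ t₂ t₃ : ℝ, t₁ ≠ t₂ ∧ t₁ ≠ t₃ ∧ t₂ ≠ t₃ ∧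
        ∀ t ∈ ({t₁, t₂, t₃} : Set ℝ),
          (n.choose 3 : ℝ) * t ^ 3 - (((n : ℝ) - 2) / 2 * (∑ i, x i ^ 2) + n) * t
            + (∑ i, x i ^ 3) / 3 = 0 := by
  have hn3 : (3:ℝ) ≤ (n:ℝ) := by exact_mod_cast hn
  set S := ∑ i, x i ^ 2 with hS
  set N3 := ∑ i, x i ^ 3 with hN3
  set a : ℝ := (n.choose 3 : ℝ) with haa
  set B : ℝ := ((n : ℝ) - 2) / 2 * S + n with hB
  have hS0 : 0 ≤ S := Finset.sum_nonneg fun i _ => sq_nonneg _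
  have ha6 : 6 * a = (n:ℝ) * ((n:ℝ) - 1) * ((n:ℝ) - 2) := six_choose_three n hn
  have ha0 : 0 < a := by
    nlinarith [mul_pos (mul_pos (show (0:ℝ) < (n:ℝ) by linarith)
      (show (0:ℝ) < (n:ℝ)-1 by linarith)) (show (0:ℝ) < (n:ℝ)-2 by linarith)]
  have hBpos : 0 < B := by
    have : 0 ≤ ((n:ℝ) - 2) / 2 * S := by
      apply mul_nonneg _ hS0; linarith
    rw [hB]; linarith
  have key := key_ineq n hn x hx
  rw [← hS, ← hN3] at key
  clear_value S N3 a B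
  have hu : 0 ≤ ((n:ℝ) - 2) * S := mul_nonneg (by linarith) hS0
  have part1 : 0 < 4 * B ^ 3 - 3 * a * N3 ^ 2 := by
    have hmul : ((n:ℝ)-2) * ((n:ℝ)*((n:ℝ)-1)*N3^2) ≤ ((n:ℝ)-2) * (((n:ℝ)-2)^2*S^3) := by
      apply mul_le_mul_of_nonneg_left _ (by linarith)
      nlinarith [key]
    have h3a : (6*a)*N3^2 = ((n:ℝ)*((n:ℝ)-1)*((n:ℝ)-2))*N3^2 := by rw [ha6]
    have h1 : 3 * a * N3^2 ≤ ((n:ℝ)-2)^3 * S^3 / 2 := by nlinarith [hmul, h3a]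
    have h2 : ((n:ℝ)-2)^3 * S^3 / 2 < 4 * B^3 := by
      rw [hB]
      nlinarith [hu, mul_nonneg hu hu,
        mul_nonneg (mul_nonneg hu hu) (by linarith : (0:ℝ) ≤ (n:ℝ)),
        mul_nonneg hu (mul_nonneg (by linarith : (0:ℝ) ≤ (n:ℝ)) (by linarith : (0:ℝ) ≤ (n:ℝ)))]
    linarith
  refine ⟨part1, ?_⟩
  have ha3 : (0:ℝ) < a ^ 3 := by positivity
  have heq : 4*(B/a)^3 - 27*((N3/3)/a)^2 = (4*B^3 - 3*a*N3^2)/a^3 := by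
    field_simp; ring
  have hD : 27*((N3/3)/a)^2 < 4*(B/a)^3 := by
    have := div_pos part1 ha3
    linarith [heq, this]
  obtain ⟨t₁, t₂, t₃, h12, h23, e1, e2, e3⟩ :=
    monic_cubic_roots (B/a) ((N3/3)/a) (div_pos hBpos ha0) hD
  have hroot : ∀ t : ℝ, t^3 - (B/a)*t + (N3/3)/a = 0 → a*t^3 - B*t + N3/3 = 0 := by
    intro t h
    have h2 : a * (t^3 - (B/a)*t + (N3/3)/a) = a*t^3 - B*t + N3/3 := by
      field_simp
    rw [← h2, h, mul_zero]
  refine ⟨t₁, t₂, t₃, ne_of_lt h12, ne_of_lt (h12.trans h23), ne_of_lt h23, ?_⟩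
  intro t ht
  simp only [Set.mem_insert_iff, Set.mem_singleton_iff] at ht
  rcases ht with rfl | rfl | rfl
  · exact hroot _ e1
  · exact hroot _ e2
  · exact hroot _ e3
end

section
/- For every n ≥ 3, the real zero set Z(σ_{2,n} − 1, ℝ^n) = {x ∈ ℝ^n : σ_{2,n}(x) = 1} has exactly 2 connected components. -/
open MvPolynomial Finset

lemma eval_esymm_two (n : ℕ) (x : Fin n → ℝ) : 2 * eval x (esymm (Fin n) ℝ 2)
    = (∑ i, x i)^2 - ∑ i, (x i)^2 := by
  have h := MvPolynomial.psum_eq_mul_esymm_sub_sum (σ := Fin n) (R := ℝ) 2 (by norm_num)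
  have ha : (antidiagonal 2 : Finset (ℕ × ℕ)) = {(0,2),(1,1),(2,0)} := by decide
  rw [ha, Finset.filter_insert, Finset.filter_insert, Finset.filter_singleton] at h
  norm_num [Set.mem_Ioo] at h
  have := congrArg (eval x) h
  simp [psum, eval_sum] at this
  rw [sq]
  linarith [this]

noncomputable def tval (n : ℕ) (v : Fin n → ℝ) : ℝ :=
  Real.sqrt ((∑ i, (v i)^2 + 2) / (n * (n-1)))

noncomputable def phi (n : ℕ) (v : Fin n → ℝ) : Fin n → ℝ := fun i => v i + tval n v

/-- For `n ≥ 3`, the real zero set of `σ_{2,n} - 1` has exactly 2 connected components. -/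
theorem sigma2_minus_one_components (n : ℕ) (hn : 3 ≤ n) :
    letI Z : Set (Fin n → ℝ) := {x | eval x (esymm (Fin n) ℝ 2 - 1) = 0}
    {K | ∃ x ∈ Z, K = connectedComponentIn Z x}.ncard = 2 := by
  set Z : Set (Fin n → ℝ) := {x | eval x (esymm (Fin n) ℝ 2 - 1) = 0} with hZdef
  have hn1 : (1:ℝ) < (n:ℝ) := by exact_mod_cast lt_of_lt_of_le (by norm_num) hn
  have hd : (0:ℝ) < (n:ℝ) * ((n:ℝ) - 1) := by nlinarith
  -- characterize Z
  have hZ : ∀ x : Fin n → ℝ, x ∈ Z ↔ (∑ i, x i)^2 = ∑ i, (x i)^2 + 2 := by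
    intro x
    have h2 := eval_esymm_two n x
    simp only [Z, Set.mem_setOf_eq, map_sub, map_one, sub_eq_zero]
    constructor
    · intro h; rw [h] at h2; linarith
    · intro h; linarith
  -- tval is positive and satisfies the defining equation
  have htpos : ∀ v : Fin n → ℝ, 0 < tval n v := by
    intro v
    apply Real.sqrt_pos.2
    apply div_pos _ hd
    positivity
  have htsq : ∀ v : Fin n → ℝ, (n:ℝ) * ((n:ℝ) - 1) * (tval n v)^2 = ∑ i, (v i)^2 + 2 := by
    intro v
    have h1 : (0:ℝ) ≤ (∑ i, (v i)^2 + 2) / (n * (n-1)) := by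
      apply div_nonneg _ hd.le; positivity
    rw [tval, Real.sq_sqrt h1]
    have hn1' : (n:ℝ) - 1 ≠ 0 := by linarith
    field_simp
  -- phi lands in Z with positive sum
  have hsum_phi : ∀ v : Fin n → ℝ, (∑ i, v i) = 0 → ∑ i, phi n v i = n * tval n v := by
    intro v hv
    simp [phi, Finset.sum_add_distrib, hv, Finset.card_univ]
  have hphi_mem : ∀ v : Fin n → ℝ, (∑ i, v i) = 0 →
      phi n v ∈ Z ∧ 0 < ∑ i, phi n v i := by
    intro v hv
    have hs := hsum_phi v hv
    have hq : ∑ i, (phi n v i)^2 = ∑ i, (v i)^2 + n * (tval n v)^2 := by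
      have he : ∀ i : Fin n, (phi n v i)^2 = (v i)^2 + (2 * tval n v) * v i + (tval n v)^2 := by
        intro i; simp only [phi]; ring
      rw [Finset.sum_congr rfl (fun i _ => he i), Finset.sum_add_distrib,
        Finset.sum_add_distrib, ← Finset.mul_sum, hv, Finset.sum_const, Finset.card_univ]
      simp [nsmul_eq_mul]
    have ht := htsq v
    constructor
    · rw [hZ, hs, hq]; nlinarith
    · rw [hs]; exact mul_pos (by linarith) (htpos v)
  -- every x in Z with positive sum is phi of some v with zero sum
  have hsurj : ∀ x : Fin n → ℝ, x ∈ Z → 0 < (∑ i, x i) →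
      ∃ v : Fin n → ℝ, (∑ i, v i) = 0 ∧ phi n v = x := by
    intro x hx hs
    set c : ℝ := (∑ i, x i) / n with hc
    have hnne : (n:ℝ) ≠ 0 := ne_of_gt (by linarith)
    have hcpos : 0 < c := by apply div_pos hs; linarith
    have hsc : (∑ i, x i) = n * c := by rw [hc]; field_simp
    refine ⟨fun i => x i - c, ?_, ?_⟩
    · simp [Finset.sum_sub_distrib, Finset.card_univ, hsc]
    · have hvq : ∑ i, (x i - c)^2 = ∑ i, (x i)^2 - 2 * c * (∑ i, x i) + n * c^2 := by
        have he : ∑ i, (x i - c)^2 = ∑ i, ((x i)^2 - (2 * c) * x i + c^2) := by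
          apply Finset.sum_congr rfl; intro i _; ring
        rw [he, Finset.sum_add_distrib, Finset.sum_sub_distrib, ← Finset.mul_sum,
          Finset.sum_const, Finset.card_univ]
        simp [nsmul_eq_mul]
      have hxz := (hZ x).1 hx
      have harg : (∑ i, (fun i => x i - c) i ^2 + 2) / (n * (n-1)) = c^2 := by
        simp only
        rw [hvq]
        have hn1' : (n:ℝ) - 1 ≠ 0 := by linarith
        field_simp
        nlinarith [hxz, hsc]
      have ht : tval n (fun i => x i - c) = c := by
        rw [tval, harg, Real.sqrt_sq hcpos.le]
      funext i
      simp [phi, ht]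
  -- the hyperplane H
  set H : Set (Fin n → ℝ) := {v | (∑ i, v i) = 0} with hH
  have hHconv : Convex ℝ H := by
    intro a ha b hb s t hs ht hst
    simp only [hH, Set.mem_setOf_eq] at ha hb ⊢
    simp only [Pi.add_apply, Pi.smul_apply, smul_eq_mul]
    rw [Finset.sum_add_distrib, ← Finset.mul_sum, ← Finset.mul_sum, ha, hb]
    ring
  have hHconn : IsConnected H := by
    refine ⟨⟨0, by simp [hH]⟩, hHconv.isPreconnected⟩
  -- continuity
  have hsum_cont : Continuous (fun x : Fin n → ℝ => ∑ i, x i) :=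
    continuous_finset_sum _ (fun i _ => continuous_apply i)
  have htcont : Continuous (tval n) := by
    apply Real.continuous_sqrt.comp
    apply Continuous.div_const
    apply Continuous.add _ continuous_const
    exact continuous_finset_sum _ (fun i _ => (continuous_apply i).pow 2)
  have hphicont : Continuous (phi n) := by
    apply continuous_pi
    intro i
    exact (continuous_apply i).add htcont
  -- the two pieces
  set P : Set (Fin n → ℝ) := {x | 0 < ∑ i, x i} with hP
  set Np : Set (Fin n → ℝ) := {x | (∑ i, x i) < 0} with hNp
  have hPopen : IsOpen P := isOpen_lt continuous_const hsum_cont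
  have hNopen : IsOpen Np := isOpen_lt hsum_cont continuous_const
  have hdisj : Disjoint P Np := by
    rw [Set.disjoint_left]; intro a ha hb
    simp only [hP, hNp, Set.mem_setOf_eq] at ha hb
    linarith
  have hZsub : Z ⊆ P ∪ Np := by
    intro x hx
    rcases lt_trichotomy (∑ i, x i) 0 with h | h | h
    · exact Or.inr h
    · exfalso
      have := (hZ x).1 hx
      rw [h] at this
      have : (0:ℝ) ≤ ∑ i, (x i)^2 := by positivity
      nlinarith [(hZ x).1 hx]
    · exact Or.inl h
  set Zp : Set (Fin n → ℝ) := Z ∩ P with hZp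
  set Zm : Set (Fin n → ℝ) := Z ∩ Np with hZm
  -- Zp is the image of H under phi
  have hZp_eq : Zp = phi n '' H := by
    ext x
    constructor
    · rintro ⟨hx, hxp⟩
      obtain ⟨v, hv0, hvx⟩ := hsurj x hx hxp
      exact ⟨v, hv0, hvx⟩
    · rintro ⟨v, hv0, rfl⟩
      exact ⟨(hphi_mem v hv0).1, (hphi_mem v hv0).2⟩
  have hZpconn : IsConnected Zp := by
    rw [hZp_eq]
    exact hHconn.image _ hphicont.continuousOn
  -- Z is symmetric under negation
  have hneg : ∀ x : Fin n → ℝ, x ∈ Z ↔ (-x) ∈ Z := by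
    intro x
    rw [hZ, hZ]
    simp
  have hZm_eq : Zm = (fun x : Fin n → ℝ => -x) '' Zp := by
    ext x
    constructor
    · rintro ⟨hx, hxn⟩
      simp only [hNp, Set.mem_setOf_eq] at hxn
      refine ⟨-x, ⟨(hneg x).1 hx, ?_⟩, by simp⟩
      simp only [hP, Set.mem_setOf_eq, Pi.neg_apply, Finset.sum_neg_distrib]
      linarith
    · rintro ⟨y, ⟨hy, hyp⟩, rfl⟩
      simp only [hP, Set.mem_setOf_eq] at hyp
      refine ⟨(hneg y).1 hy, ?_⟩
      simp only [hNp, Set.mem_setOf_eq, Pi.neg_apply, Finset.sum_neg_distrib]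
      linarith
  have hZmconn : IsConnected Zm := by
    rw [hZm_eq]
    exact hZpconn.image _ (continuous_neg.continuousOn)
  -- components
  have hcomp_p : ∀ x ∈ Zp, connectedComponentIn Z x = Zp := by
    intro x hx
    apply le_antisymm
    · intro y hy
      have hsubZ : connectedComponentIn Z x ⊆ Z := connectedComponentIn_subset Z x
      have hconn := isPreconnected_connectedComponentIn (F := Z) (x := x)
      have hsub : connectedComponentIn Z x ⊆ P :=
        hconn.subset_left_of_subset_union hPopen hNopen hdisj
          (hsubZ.trans hZsub) ⟨x, mem_connectedComponentIn hx.1, hx.2⟩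
      exact ⟨hsubZ hy, hsub hy⟩
    · exact hZpconn.isPreconnected.subset_connectedComponentIn hx (Set.inter_subset_left)
  have hcomp_m : ∀ x ∈ Zm, connectedComponentIn Z x = Zm := by
    intro x hx
    apply le_antisymm
    · intro y hy
      have hsubZ : connectedComponentIn Z x ⊆ Z := connectedComponentIn_subset Z x
      have hconn := isPreconnected_connectedComponentIn (F := Z) (x := x)
      have hsub : connectedComponentIn Z x ⊆ Np :=
        hconn.subset_right_of_subset_union hPopen hNopen hdisj
          (hsubZ.trans hZsub) ⟨x, mem_connectedComponentIn hx.1, hx.2⟩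
      exact ⟨hsubZ hy, hsub hy⟩
    · exact hZmconn.isPreconnected.subset_connectedComponentIn hx (Set.inter_subset_left)
  -- base points
  obtain ⟨x0, hx0⟩ : ∃ x0, x0 ∈ Zp := by
    have := hphi_mem 0 (by simp)
    exact ⟨phi n 0, this.1, this.2⟩
  obtain ⟨x1, hx1⟩ : ∃ x1, x1 ∈ Zm := by
    rw [hZm_eq]
    exact ⟨-x0, x0, hx0, rfl⟩
  -- the set of components
  have hset : {K | ∃ x ∈ Z, K = connectedComponentIn Z x} = {Zp, Zm} := by
    ext K
    constructor
    · rintro ⟨x, hx, rfl⟩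
      rcases hZsub hx with h | h
      · exact Or.inl (hcomp_p x ⟨hx, h⟩)
      · exact Or.inr (hcomp_m x ⟨hx, h⟩)
    · rintro (rfl | rfl)
      · exact ⟨x0, hx0.1, (hcomp_p x0 hx0).symm⟩
      · exact ⟨x1, hx1.1, (hcomp_m x1 hx1).symm⟩
  rw [hset]
  apply Set.ncard_pair
  intro h
  have h2 : x0 ∈ Zm := h ▸ hx0
  have h3 : (∑ i, x0 i) < 0 := h2.2
  have h4 : 0 < (∑ i, x0 i) := hx0.2
  linarith
end

section
/- For every n ≥ 3, the real zero set Z(σ_{3,n} − σ_{1,n}, ℝ^n) = {x ∈ ℝ^n : σ_{3,n}(x) = σ_{1,n}(x)} has exactly 3 connected components. -/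
open MvPolynomial Finset

namespace S31

variable {m : ℕ}

/-- power sums -/
def sA (y : Fin m → ℝ) : ℝ := ∑ i, y i
def sB (y : Fin m → ℝ) : ℝ := ∑ i, (y i)^2
def sC (y : Fin m → ℝ) : ℝ := ∑ i, (y i)^3
def GG (y : Fin m → ℝ) : ℝ := sA y^3 - 3*sA y*sB y + 2*sC y - 6*sA y
def qq (y : Fin m → ℝ) : ℝ := sA y^2 - sB y
noncomputable def tau (y : Fin m → ℝ) : ℝ := -GG y/(3*(qq y - 2))
noncomputable def L (y : Fin m → ℝ) : Fin (m+1) → ℝ := Fin.snoc y (tau y)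

lemma sA_snoc (y : Fin m → ℝ) (t : ℝ) : sA (Fin.snoc y t) = sA y + t := by
  simp [sA, Fin.sum_univ_castSucc]
lemma sB_snoc (y : Fin m → ℝ) (t : ℝ) : sB (Fin.snoc y t) = sB y + t^2 := by
  simp [sB, Fin.sum_univ_castSucc]
lemma sC_snoc (y : Fin m → ℝ) (t : ℝ) : sC (Fin.snoc y t) = sC y + t^3 := by
  simp [sC, Fin.sum_univ_castSucc]

lemma GG_snoc (y : Fin m → ℝ) (t : ℝ) :
    GG (Fin.snoc y t) = GG y + 3*t*(qq y - 2) := by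
  simp only [GG, qq, sA_snoc, sB_snoc, sC_snoc]; ring

lemma GG_L (y : Fin m → ℝ) (hq : qq y ≠ 2) : GG (L y) = 0 := by
  rw [L, GG_snoc, tau]
  have : qq y - 2 ≠ 0 := sub_ne_zero.mpr hq
  field_simp
  ring

lemma init_L (y : Fin m → ℝ) : Fin.init (L y) = y := Fin.init_snoc ..

lemma sA_cont : Continuous (sA : (Fin m → ℝ) → ℝ) :=
  continuous_finset_sum _ fun i _ => continuous_apply i
lemma sB_cont : Continuous (sB : (Fin m → ℝ) → ℝ) :=
  continuous_finset_sum _ fun i _ => (continuous_apply i).pow 2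
lemma sC_cont : Continuous (sC : (Fin m → ℝ) → ℝ) :=
  continuous_finset_sum _ fun i _ => (continuous_apply i).pow 3
lemma qq_cont : Continuous (qq : (Fin m → ℝ) → ℝ) := (sA_cont.pow 2).sub sB_cont
lemma GG_cont : Continuous (GG : (Fin m → ℝ) → ℝ) := by
  exact ((((sA_cont.pow 3).sub ((continuous_const.mul sA_cont).mul sB_cont)).add
    (continuous_const.mul sC_cont)).sub (continuous_const.mul sA_cont))

lemma init_cont : Continuous (Fin.init : (Fin (m+1) → ℝ) → (Fin m → ℝ)) :=
  continuous_pi fun i => continuous_apply i.castSucc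

lemma L_contOn : ContinuousOn (L : (Fin m → ℝ) → _) {y | qq y ≠ 2} := by
  apply continuousOn_pi.mpr
  intro j
  refine Fin.lastCases ?_ ?_ j
  · have : ∀ y : Fin m → ℝ, L y (Fin.last m) = tau y := fun y => Fin.snoc_last ..
    simp only [this]
    apply ContinuousOn.div (GG_cont.neg.continuousOn)
    · exact (continuous_const.mul (qq_cont.sub continuous_const)).continuousOn
    · intro y hy
      have : qq y - 2 ≠ 0 := sub_ne_zero.mpr hy
      simpa using this
  · intro i
    have : ∀ y : Fin m → ℝ, L y i.castSucc = y i := fun y => Fin.snoc_castSucc ..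
    simp only [this]
    exact (continuous_apply i).continuousOn


lemma sum_expand {α : Type*} (s : Finset α) (y : α → ℝ) (c0 c1 c2 c3 c4 : ℝ) :
    ∑ i ∈ s, (c0 + c1 * y i + c2 * (y i)^2 + c3 * (y i)^3 + c4 * (y i)^4)
      = s.card * c0 + c1 * (∑ i ∈ s, y i) + c2 * (∑ i ∈ s, (y i)^2)
        + c3 * (∑ i ∈ s, (y i)^3) + c4 * (∑ i ∈ s, (y i)^4) := by
  simp [Finset.sum_add_distrib, ← Finset.mul_sum, Finset.sum_const, mul_comm]

lemma EE_val {m : ℕ} (y : Fin m → ℝ) :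
    ∑ i, ∑ j, (y i - y j)^2 * ((∑ k, y k) - y i - y j)^2
      = 2*m*(∑ k, y k)^2*(∑ k, (y k)^2) - 2*(∑ k, y k)^4 - 4*m*(∑ k, y k)*(∑ k, (y k)^3)
        + 4*(∑ k, y k)^2*(∑ k, (y k)^2) + 2*m*(∑ k, (y k)^4) - 2*(∑ k, (y k)^2)^2 := by
  set A := ∑ k, y k with hA
  set B := ∑ k, (y k)^2 with hB
  set C := ∑ k, (y k)^3 with hC
  set D := ∑ k, (y k)^4 with hD
  have h1 : ∀ a : ℝ, ∑ j, (a - y j)^2 * (A - a - y j)^2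
      = (m : ℝ) * (a^2*(A-a)^2) + (-2*a*(A-a)*A) * A
        + ((A-a)^2 + 4*a*(A-a) + a^2) * B + (-2*A) * C + 1 * D := by
    intro a
    rw [show ∑ j, (a - y j)^2 * (A - a - y j)^2
        = ∑ j, ((a^2*(A-a)^2) + (-2*a*(A-a)*A) * y j + ((A-a)^2 + 4*a*(A-a) + a^2) * (y j)^2
          + (-2*A) * (y j)^3 + 1 * (y j)^4) from Finset.sum_congr rfl fun j _ => by ring]
    rw [sum_expand]
    simp [card_univ]
    rw [← hA, ← hB, ← hC, ← hD]
  calc ∑ i, ∑ j, (y i - y j)^2 * (A - y i - y j)^2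
      = ∑ i, ((B*A^2 - 2*A*C + D) + (-2*A^3 + 2*A*B) * y i
          + ((m:ℝ)*A^2 + 2*A^2 - 2*B) * (y i)^2 + (-2*(m:ℝ)*A) * (y i)^3 + (m:ℝ) * (y i)^4) :=
        Finset.sum_congr rfl fun i _ => by rw [h1 (y i)]; ring
    _ = _ := by rw [sum_expand]; simp [card_univ]; ring

lemma T2_val {m : ℕ} (y : Fin m → ℝ) :
    ∑ a, (y a)^2 * (∑ b ∈ univ.erase a, ∑ c ∈ (univ.erase a).erase b, (y b - y c)^2)
      = 2*((m:ℝ)*(∑ k, (y k)^2)^2 - (∑ k, y k)^2*(∑ k, (y k)^2) - m*(∑ k, (y k)^4)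
          + 2*(∑ k, y k)*(∑ k, (y k)^3) - (∑ k, (y k)^2)^2) := by
  set A := ∑ k, y k with hA
  set B := ∑ k, (y k)^2 with hB
  set C := ∑ k, (y k)^3 with hC
  set D := ∑ k, (y k)^4 with hD
  have hW : ∀ a : Fin m, ∑ b ∈ univ.erase a, ∑ c ∈ (univ.erase a).erase b, (y b - y c)^2
      = 2*((m:ℝ)-1)*(B - (y a)^2) - 2*(A - y a)^2 := by
    intro a
    have h0 : ∀ b ∈ univ.erase a, ∑ c ∈ (univ.erase a).erase b, (y b - y c)^2
        = ∑ c ∈ univ.erase a, (y b - y c)^2 := fun b _ =>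
      Finset.sum_erase _ (by ring)
    rw [Finset.sum_congr rfl h0]
    have hcard : (univ.erase a).card = m - 1 := by
      rw [Finset.card_erase_of_mem (mem_univ a), card_univ, Fintype.card_fin]
    have hAe : ∑ c ∈ univ.erase a, y c = A - y a := by
      rw [hA, Finset.sum_erase_eq_sub (mem_univ a)]
    have hBe : ∑ c ∈ univ.erase a, (y c)^2 = B - (y a)^2 := by
      rw [hB, Finset.sum_erase_eq_sub (mem_univ a)]
    have hin : ∀ b ∈ univ.erase a, ∑ c ∈ univ.erase a, (y b - y c)^2
        = ((m:ℝ)-1)*(y b)^2 - 2*(y b)*(A - y a) + (B - (y a)^2) := by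
      intro b _
      rw [show ∑ c ∈ univ.erase a, (y b - y c)^2
          = ∑ c ∈ univ.erase a, ((y b)^2 + (-2*(y b)) * y c + 1 * (y c)^2 + 0 * (y c)^3
            + 0 * (y c)^4) from Finset.sum_congr rfl fun c _ => by ring]
      rw [sum_expand, hcard, hAe, hBe]
      have hm1 : ((m-1 : ℕ) : ℝ) = (m:ℝ) - 1 := by
        have : 1 ≤ m := Nat.one_le_iff_ne_zero.mpr (by rintro rfl; exact absurd a.2 (by simp))
        push_cast [this]; ring
      rw [hm1]; ring
    rw [Finset.sum_congr rfl hin]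
    rw [show ∀ s : Finset (Fin m), ∑ b ∈ s, (((m:ℝ)-1)*(y b)^2 - 2*(y b)*(A - y a) + (B - (y a)^2))
        = ∑ b ∈ s, ((B - (y a)^2) + (-2*(A - y a)) * y b + ((m:ℝ)-1) * (y b)^2 + 0 * (y b)^3
          + 0 * (y b)^4) from fun s => Finset.sum_congr rfl fun b _ => by ring]
    rw [sum_expand, hcard, hAe, hBe]
    have hm1 : ((m-1 : ℕ) : ℝ) = (m:ℝ) - 1 := by
      have : 1 ≤ m := Nat.one_le_iff_ne_zero.mpr (by rintro rfl; exact absurd a.2 (by simp))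
      push_cast [this]; ring
    rw [hm1]; ring
  calc ∑ a, (y a)^2 * (∑ b ∈ univ.erase a, ∑ c ∈ (univ.erase a).erase b, (y b - y c)^2)
      = ∑ a, (0 + 0 * y a + (2*((m:ℝ)-1)*B - 2*A^2) * (y a)^2 + (4*A) * (y a)^3
          + (-2*(m:ℝ)) * (y a)^4) := Finset.sum_congr rfl fun a _ => by rw [hW a]; ring
    _ = _ := by rw [sum_expand]; simp [card_univ]; ring

lemma key {m : ℕ} (hm : 2 ≤ m) (y : Fin m → ℝ)
    (hB : ∑ i, (y i)^2 = (∑ i, y i)^2 - 2) (hC : ∑ i, (y i)^3 = (∑ i, y i)^3) : False := by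
  set A := ∑ k, y k with hA
  set B := ∑ k, (y k)^2 with hBs
  set C := ∑ k, (y k)^3 with hCs
  set D := ∑ k, (y k)^4 with hD
  have hCS : A^2 ≤ (m:ℝ) * B := by
    have := Finset.sum_mul_sq_le_sq_mul_sq univ y (fun _ => (1:ℝ))
    simp only [mul_one, one_pow, Finset.sum_const, card_univ, Fintype.card_fin,
      nsmul_eq_mul, mul_one] at this
    calc A^2 ≤ B * m := this
      _ = (m:ℝ) * B := by ring
  have hEE : (0:ℝ) ≤ 2*m*A^2*B - 2*A^4 - 4*m*A*C + 4*A^2*B + 2*m*D - 2*B^2 := by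
    rw [← EE_val y]
    exact Finset.sum_nonneg fun i _ => Finset.sum_nonneg fun j _ =>
      mul_nonneg (sq_nonneg _) (sq_nonneg _)
  have hT2 : (0:ℝ) ≤ 2*((m:ℝ)*B^2 - A^2*B - m*D + 2*A*C - B^2) := by
    rw [← T2_val y]
    exact Finset.sum_nonneg fun a _ => mul_nonneg (sq_nonneg _)
      (Finset.sum_nonneg fun b _ => Finset.sum_nonneg fun c _ => sq_nonneg _)
  have hm' : (2:ℝ) ≤ (m:ℝ) := by exact_mod_cast hm
  have hsum := add_nonneg hEE hT2
  rw [hB, hC] at hsum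
  rw [hB] at hCS
  have hsum2 : (0:ℝ) ≤ 8*(m:ℝ) - 16 - 12*((m:ℝ)-1)*A^2 := by nlinarith [hsum]
  nlinarith [hsum2, hCS, hm']


lemma sA_affine (z : Fin m → ℝ) (a b : ℝ) :
    sA (fun i => a * z i + b) = a * sA z + m * b := by
  unfold sA
  calc ∑ i, (a * z i + b) = ∑ i, (b + a * z i + 0*(z i)^2 + 0*(z i)^3 + 0*(z i)^4) :=
        Finset.sum_congr rfl fun i _ => by ring
    _ = _ := by rw [sum_expand]; simp [card_univ]; ring

lemma sB_affine (z : Fin m → ℝ) (a b : ℝ) :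
    sB (fun i => a * z i + b) = a^2 * sB z + 2*a*b*sA z + m * b^2 := by
  unfold sB sA
  calc ∑ i, (a * z i + b)^2
      = ∑ i, (b^2 + (2*a*b) * z i + a^2*(z i)^2 + 0*(z i)^3 + 0*(z i)^4) :=
        Finset.sum_congr rfl fun i _ => by ring
    _ = _ := by rw [sum_expand]; simp [card_univ]; ring

lemma sA_const (d : ℝ) : sA (fun _ : Fin m => d) = m * d := by
  simp [sA, Finset.sum_const, card_univ, mul_comm]
lemma sB_const (d : ℝ) : sB (fun _ : Fin m => d) = m * d^2 := by
  simp [sB, Finset.sum_const, card_univ, mul_comm]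
lemma qq_const (d : ℝ) : qq (fun _ : Fin m => d) = (m:ℝ)^2*d^2 - m*d^2 := by
  simp [qq, sA_const, sB_const]; ring

lemma sB_nonneg (y : Fin m → ℝ) : 0 ≤ sB y :=
  Finset.sum_nonneg fun i _ => sq_nonneg _

lemma CS (y : Fin m → ℝ) : sA y^2 ≤ m * sB y := by
  have := Finset.sum_mul_sq_le_sq_mul_sq univ y (fun _ => (1:ℝ))
  simp only [mul_one, one_pow, Finset.sum_const, card_univ, Fintype.card_fin,
    nsmul_eq_mul, mul_one] at this
  calc sA y^2 ≤ sB y * m := this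
    _ = m * sB y := by ring

def V0 : Set (Fin m → ℝ) := {y | qq y < 2}
def Vp : Set (Fin m → ℝ) := {y | 2 < qq y ∧ 0 < sA y}
def Vm : Set (Fin m → ℝ) := {y | 2 < qq y ∧ sA y < 0}

lemma joinedIn_of_seg {V : Set (Fin m → ℝ)} {y z : Fin m → ℝ}
    (h : ∀ s : ℝ, 0 ≤ s → s ≤ 1 → (fun i => (1-s) * y i + s * z i) ∈ V) :
    JoinedIn V y z := by
  refine ⟨⟨⟨fun s => fun i => (1 - (s:ℝ)) * y i + (s:ℝ) * z i, ?_⟩, ?_, ?_⟩, fun s => h s s.2.1 s.2.2⟩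
  · exact continuous_pi fun i =>
      (((continuous_const.sub continuous_subtype_val).mul continuous_const).add
        (continuous_subtype_val.mul continuous_const))
  · funext i; norm_num
  · funext i; norm_num

lemma V0_path : IsPathConnected (V0 (m := m)) := by
  refine ⟨0, ?_, ?_⟩
  · show qq (0 : Fin m → ℝ) < 2
    have h0 : (0 : Fin m → ℝ) = fun _ => (0:ℝ) := rfl
    rw [h0, qq_const]; norm_num
  · intro y hy
    refine (joinedIn_of_seg fun s hs0 hs1 => ?_).symm
    have harg : (fun i => (1-s) * y i + s * (0 : Fin m → ℝ) i) = fun i => (1-s) * y i + 0 := by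
      funext i; simp
    have hq : qq (fun i => (1-s) * y i + 0) = (1-s)^2 * qq y := by
      unfold qq; rw [sA_affine, sB_affine]; ring
    show qq _ < 2
    rw [harg, hq]
    have hy' : qq y < 2 := hy
    rcases le_or_gt (qq y) 0 with h|h
    · nlinarith [mul_nonpos_of_nonneg_of_nonpos (sq_nonneg (1-s)) h]
    · have hu : (1-s)^2 ≤ 1 := by nlinarith
      have := mul_le_mul_of_nonneg_right hu h.le
      linarith

lemma J1 (hm : 2 ≤ m) {z : Fin m → ℝ} (hz : z ∈ Vp) :
    JoinedIn (Vp (m := m)) z (fun _ => sA z / m) := by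
  obtain ⟨hq2, hA⟩ := hz
  have hm0 : (0:ℝ) < m := by positivity
  apply joinedIn_of_seg
  intro s hs0 hs1
  have harg : (fun i => (1-s) * z i + s * (fun _ : Fin m => sA z / m) i)
      = fun i => (1-s) * z i + s * (sA z / m) := by funext i; simp
  have hAv : sA (fun i => (1-s) * z i + s * (sA z / m)) = sA z := by
    rw [sA_affine]; field_simp; ring
  have hqv : qq (fun i => (1-s) * z i + s * (sA z / m))
      = qq z + (2*s - s^2) * (sB z - sA z^2 / m) := by
    unfold qq; rw [sA_affine, sB_affine]; field_simp; ring
  have hcs : 0 ≤ sB z - sA z^2/m := by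
    rw [sub_nonneg, div_le_iff₀ hm0]
    calc sA z^2 ≤ m * sB z := CS z
      _ = sB z * m := by ring
  constructor
  · show 2 < qq _
    rw [harg, hqv]
    nlinarith [mul_nonneg hs0 (sub_nonneg.mpr hs1)]
  · show 0 < sA _
    rw [harg, hAv]; exact hA

lemma J2 (hm : 2 ≤ m) {d1 d2 : ℝ} (h1 : (fun _ => d1) ∈ Vp (m := m))
    (h2 : (fun _ => d2) ∈ Vp (m := m)) :
    JoinedIn (Vp (m := m)) (fun _ => d1) (fun _ => d2) := by
  obtain ⟨hq1, hA1⟩ := h1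
  obtain ⟨hq2, hA2⟩ := h2
  rw [qq_const] at hq1 hq2
  rw [sA_const] at hA1 hA2
  have hm0 : (0:ℝ) < m := by positivity
  have hd1 : 0 < d1 := by
    rcases mul_pos_iff.mp hA1 with ⟨_, h⟩ | ⟨h, _⟩
    · exact h
    · exact absurd h (by linarith)
  have hd2 : 0 < d2 := by
    rcases mul_pos_iff.mp hA2 with ⟨_, h⟩ | ⟨h, _⟩
    · exact h
    · exact absurd h (by linarith)
  have hmm : (0:ℝ) ≤ (m:ℝ)^2 - m := by nlinarith
  apply joinedIn_of_seg
  intro s hs0 hs1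
  have harg : (fun i => (1-s) * (fun _ : Fin m => d1) i + s * (fun _ : Fin m => d2) i)
      = (fun _ : Fin m => ((1-s)*d1 + s*d2)) := rfl
  have hd : 0 < (1-s)*d1 + s*d2 ∧ (min d1 d2)^2 ≤ ((1-s)*d1 + s*d2)^2 := by
    rcases le_total d1 d2 with hc | hc
    · have hge : d1 ≤ (1-s)*d1 + s*d2 := by nlinarith [mul_nonneg hs0 (sub_nonneg.mpr hc)]
      constructor
      · linarith
      · rw [min_eq_left hc]; nlinarith
    · have hge : d2 ≤ (1-s)*d1 + s*d2 := by
        nlinarith [mul_nonneg (sub_nonneg.mpr hs1) (sub_nonneg.mpr hc)]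
      constructor
      · linarith
      · rw [min_eq_right hc]; nlinarith
  constructor
  · show 2 < qq _
    rw [harg, qq_const]
    rcases le_total d1 d2 with hc | hc
    · rw [min_eq_left hc] at hd; nlinarith [hd.2, hq1, hmm]
    · rw [min_eq_right hc] at hd; nlinarith [hd.2, hq2, hmm]
  · show 0 < sA _
    rw [harg, sA_const]
    exact mul_pos hm0 hd.1



lemma key' (hm : 2 ≤ m) (y : Fin m → ℝ) (hB : sB y = sA y^2 - 2) (hC : sC y = sA y^3) :
    False := key hm y hB hC

lemma claim1 (hm : 2 ≤ m) (x : Fin (m+1) → ℝ) (hx : GG x = 0)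
    (hq : qq (Fin.init x) = 2) : False := by
  set y := Fin.init x with hy
  have hxe : Fin.snoc y (x (Fin.last m)) = x := Fin.snoc_init_self x
  have h2 := GG_snoc y (x (Fin.last m))
  rw [hxe, hx, hq] at h2
  have hGy : GG y = 0 := by
    rw [sub_self, mul_zero, add_zero] at h2
    linarith [h2]
  have hB : sB y = sA y^2 - 2 := by
    have : sA y^2 - sB y = 2 := hq
    linarith
  have hC : sC y = sA y^3 := by
    unfold GG at hGy
    rw [hB] at hGy
    nlinarith [hGy]
  exact key' hm y hB hC

lemma trichotomy (hm : 2 ≤ m) (x : Fin (m+1) → ℝ) (hx : GG x = 0) :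
    qq (Fin.init x) < 2 ∨ (2 < qq (Fin.init x) ∧ 0 < sA (Fin.init x))
      ∨ (2 < qq (Fin.init x) ∧ sA (Fin.init x) < 0) := by
  rcases lt_trichotomy (qq (Fin.init x)) 2 with h | h | h
  · exact Or.inl h
  · exact absurd h (fun h => claim1 hm x hx h)
  · have hA2 : 2 < sA (Fin.init x)^2 := by
      have := sB_nonneg (Fin.init x)
      have : qq (Fin.init x) ≤ sA (Fin.init x)^2 := by unfold qq at *; linarith
      linarith
    rcases lt_trichotomy (sA (Fin.init x)) 0 with hA | hA | hA
    · exact Or.inr (Or.inr ⟨h, hA⟩)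
    · rw [hA] at hA2; norm_num at hA2
    · exact Or.inr (Or.inl ⟨h, hA⟩)

def Cset (P : Set (Fin m → ℝ)) : Set (Fin (m+1) → ℝ) := {x | GG x = 0 ∧ Fin.init x ∈ P}

lemma Cset_eq (P : Set (Fin m → ℝ)) (hP : ∀ y ∈ P, qq y ≠ 2) : Cset P = L '' P := by
  ext x
  constructor
  · rintro ⟨hx, hi⟩
    refine ⟨Fin.init x, hi, ?_⟩
    have hq := hP _ hi
    have hxe : Fin.snoc (Fin.init x) (x (Fin.last m)) = x := Fin.snoc_init_self x
    have h2 := GG_snoc (Fin.init x) (x (Fin.last m))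
    rw [hxe, hx] at h2
    have hqne : qq (Fin.init x) - 2 ≠ 0 := sub_ne_zero.mpr hq
    have ht : x (Fin.last m) = tau (Fin.init x) := by
      rw [tau]
      field_simp
      linarith [h2]
    rw [L, ← ht, hxe]
  · rintro ⟨y, hy, rfl⟩
    exact ⟨GG_L y (hP y hy), by rw [init_L]; exact hy⟩

lemma Vm_eq : (Vm : Set (Fin m → ℝ)) = (fun y => -y) '' Vp := by
  have hA : ∀ y : Fin m → ℝ, sA (-y) = -sA y := by
    intro y; unfold sA; rw [← Finset.sum_neg_distrib]; rfl
  have hB : ∀ y : Fin m → ℝ, sB (-y) = sB y := by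
    intro y; unfold sB; apply Finset.sum_congr rfl; intro i _; simp [neg_sq]
  have hq : ∀ y : Fin m → ℝ, qq (-y) = qq y := by
    intro y; unfold qq; rw [hA, hB]; ring
  ext y
  constructor
  · rintro ⟨h1, h2⟩
    exact ⟨-y, ⟨by rw [hq]; exact h1, by rw [hA]; linarith⟩, by simp⟩
  · rintro ⟨z, ⟨h1, h2⟩, rfl⟩
    exact ⟨by rw [hq]; exact h1, by rw [hA]; linarith⟩

lemma Vp_path (hm : 2 ≤ m) : IsPathConnected (Vp (m := m)) := by
  have hm0 : (0:ℝ) < m := by positivity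
  have hbase : (fun _ : Fin m => (2:ℝ)) ∈ Vp := by
    constructor
    · show 2 < qq _
      rw [qq_const]
      have : (2:ℝ) ≤ m := by exact_mod_cast hm
      nlinarith
    · show 0 < sA _
      rw [sA_const]; positivity
  refine ⟨(fun _ : Fin m => (2:ℝ)), hbase, ?_⟩
  intro z hz
  have j1 := J1 hm hz
  have j2 := J2 hm hbase j1.target_mem
  exact j2.trans j1.symm

lemma Vm_path (hm : 2 ≤ m) : IsPathConnected (Vm (m := m)) := by
  rw [Vm_eq]
  exact (Vp_path hm).image continuous_neg

lemma V0_sub : (V0 : Set (Fin m → ℝ)) ⊆ {y | qq y ≠ 2} := fun y hy => ne_of_lt hy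
lemma Vp_sub : (Vp : Set (Fin m → ℝ)) ⊆ {y | qq y ≠ 2} := fun y hy => (ne_of_lt hy.1).symm
lemma Vm_sub : (Vm : Set (Fin m → ℝ)) ⊆ {y | qq y ≠ 2} := fun y hy => (ne_of_lt hy.1).symm

lemma Cset_path {P : Set (Fin m → ℝ)} (hP : P ⊆ {y | qq y ≠ 2}) (hpath : IsPathConnected P) :
    IsPathConnected (Cset P) := by
  rw [Cset_eq P hP]
  exact hpath.image' (L_contOn.mono hP)

lemma comp_eq {X : Type*} [TopologicalSpace X] {Z C U W : Set X}
    (hU : IsOpen U) (hW : IsOpen W) (hdisj : Disjoint U W) (hZUW : Z ⊆ U ∪ W)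
    (hC : C = Z ∩ U) (hconn : IsPreconnected C) {x : X} (hx : x ∈ C) :
    connectedComponentIn Z x = C := by
  have hCZ : C ⊆ Z := hC ▸ Set.inter_subset_left
  apply Set.Subset.antisymm
  · have hsub : connectedComponentIn Z x ⊆ U := by
      apply (isPreconnected_connectedComponentIn).subset_left_of_subset_union hU hW hdisj
      · exact (connectedComponentIn_subset Z x).trans hZUW
      · exact ⟨x, mem_connectedComponentIn (hCZ hx), (hC ▸ hx).2⟩
    rw [hC]
    exact Set.subset_inter (connectedComponentIn_subset Z x) hsub
  · exact hconn.subset_connectedComponentIn hx hCZ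

lemma esymm1_eval {N : ℕ} (x : Fin N → ℝ) : eval x (esymm (Fin N) ℝ 1) = sA x := by
  rw [esymm_one]; simp [sA]

lemma esymm2_eval {N : ℕ} (x : Fin N → ℝ) :
    2 * eval x (esymm (Fin N) ℝ 2) = sA x^2 - sB x := by
  have h := psum_eq_mul_esymm_sub_sum (Fin N) ℝ 2 (by norm_num)
  have h2 : filter (fun a => a.1 ∈ Set.Ioo 0 2) (antidiagonal 2) = {(1,1)} := by decide
  rw [h2] at h
  have := congrArg (eval x) h
  simp [psum, esymm_one] at this
  unfold sA sB
  nlinarith [this]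

lemma esymm3_eval {N : ℕ} (x : Fin N → ℝ) :
    6 * eval x (esymm (Fin N) ℝ 3) = sA x^3 - 3*sA x*sB x + 2*sC x := by
  have h2 := esymm2_eval x
  have h := psum_eq_mul_esymm_sub_sum (Fin N) ℝ 3 (by norm_num)
  have h3 : filter (fun a => a.1 ∈ Set.Ioo 0 3) (antidiagonal 3) = {(1,2),(2,1)} := by decide
  rw [h3] at h
  have := congrArg (eval x) h
  simp [psum, esymm_one] at this
  unfold sA sB sC
  unfold sA sB at h2
  linear_combination (-2) * this + (∑ i, x i) * h2

end S31

open S31 in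
/-- For `n ≥ 3`, the real zero set of `σ_{3,n} - σ_{1,n}` has exactly 3 connected
components. -/
theorem sigma3_minus_sigma1_components (n : ℕ) (hn : 3 ≤ n) :
    letI Z : Set (Fin n → ℝ) :=
      {x | eval x (esymm (Fin n) ℝ 3 - esymm (Fin n) ℝ 1) = 0}
    {K | ∃ x ∈ Z, K = connectedComponentIn Z x}.ncard = 3 := by
  obtain ⟨m, rfl⟩ : ∃ m, n = m + 1 := ⟨n-1, by omega⟩
  have hm : 2 ≤ m := by omega
  have hZeq : {x : Fin (m+1) → ℝ |
        eval x (esymm (Fin (m+1)) ℝ 3 - esymm (Fin (m+1)) ℝ 1) = 0}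
      = {x : Fin (m+1) → ℝ | GG x = 0} := by
    ext x
    simp only [Set.mem_setOf_eq, map_sub]
    have h1 := esymm1_eval x
    have h3 := esymm3_eval x
    unfold GG
    constructor
    · intro h; linarith
    · intro h; linarith
  show {K | ∃ x ∈ {x : Fin (m+1) → ℝ |
      eval x (esymm (Fin (m+1)) ℝ 3 - esymm (Fin (m+1)) ℝ 1) = 0},
      K = connectedComponentIn {x : Fin (m+1) → ℝ |
      eval x (esymm (Fin (m+1)) ℝ 3 - esymm (Fin (m+1)) ℝ 1) = 0} x}.ncard = 3
  rw [hZeq]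
  set Zs : Set (Fin (m+1) → ℝ) := {x : Fin (m+1) → ℝ | GG x = 0} with hZs
  -- continuity
  have hcq : Continuous (fun x : Fin (m+1) → ℝ => qq (Fin.init x)) := qq_cont.comp init_cont
  have hca : Continuous (fun x : Fin (m+1) → ℝ => sA (Fin.init x)) := sA_cont.comp init_cont
  have hU0 : IsOpen {x : Fin (m+1) → ℝ | qq (Fin.init x) < 2} := isOpen_Iio.preimage hcq
  have hUQ : IsOpen {x : Fin (m+1) → ℝ | 2 < qq (Fin.init x)} := isOpen_Ioi.preimage hcq
  have hUp : IsOpen {x : Fin (m+1) → ℝ | 2 < qq (Fin.init x) ∧ 0 < sA (Fin.init x)} := by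
    have : {x : Fin (m+1) → ℝ | 2 < qq (Fin.init x) ∧ 0 < sA (Fin.init x)}
        = {x | 2 < qq (Fin.init x)} ∩ {x | 0 < sA (Fin.init x)} := rfl
    rw [this]
    exact hUQ.inter (isOpen_Ioi.preimage hca)
  have hUm : IsOpen {x : Fin (m+1) → ℝ | 2 < qq (Fin.init x) ∧ sA (Fin.init x) < 0} := by
    have : {x : Fin (m+1) → ℝ | 2 < qq (Fin.init x) ∧ sA (Fin.init x) < 0}
        = {x | 2 < qq (Fin.init x)} ∩ {x | sA (Fin.init x) < 0} := rfl
    rw [this]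
    exact hUQ.inter (isOpen_Iio.preimage hca)
  -- the three candidate components
  have hpre0 : IsPreconnected (Cset (V0 (m := m))) :=
    (Cset_path V0_sub V0_path).isConnected.isPreconnected
  have hprep : IsPreconnected (Cset (Vp (m := m))) :=
    (Cset_path Vp_sub (Vp_path hm)).isConnected.isPreconnected
  have hprem : IsPreconnected (Cset (Vm (m := m))) :=
    (Cset_path Vm_sub (Vm_path hm)).isConnected.isPreconnected
  have hcov0 : Zs ⊆ {x : Fin (m+1) → ℝ | qq (Fin.init x) < 2}
      ∪ {x : Fin (m+1) → ℝ | 2 < qq (Fin.init x)} := by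
    intro x hx
    rcases trichotomy hm x hx with h | h | h
    · exact Or.inl h
    · exact Or.inr h.1
    · exact Or.inr h.1
  have hcovp : Zs ⊆ {x : Fin (m+1) → ℝ | 2 < qq (Fin.init x) ∧ 0 < sA (Fin.init x)}
      ∪ ({x : Fin (m+1) → ℝ | qq (Fin.init x) < 2}
        ∪ {x : Fin (m+1) → ℝ | 2 < qq (Fin.init x) ∧ sA (Fin.init x) < 0}) := by
    intro x hx
    rcases trichotomy hm x hx with h | h | h
    · exact Or.inr (Or.inl h)
    · exact Or.inl h
    · exact Or.inr (Or.inr h)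
  have hcovm : Zs ⊆ {x : Fin (m+1) → ℝ | 2 < qq (Fin.init x) ∧ sA (Fin.init x) < 0}
      ∪ ({x : Fin (m+1) → ℝ | qq (Fin.init x) < 2}
        ∪ {x : Fin (m+1) → ℝ | 2 < qq (Fin.init x) ∧ 0 < sA (Fin.init x)}) := by
    intro x hx
    rcases trichotomy hm x hx with h | h | h
    · exact Or.inr (Or.inl h)
    · exact Or.inr (Or.inr h)
    · exact Or.inl h
  have hcomp0 : ∀ x ∈ Cset (V0 (m := m)), connectedComponentIn Zs x = Cset V0 := by
    intro x hx
    refine comp_eq hU0 hUQ ?_ hcov0 rfl hpre0 hx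
    rw [Set.disjoint_left]
    intro a ha ha'
    simp only [Set.mem_setOf_eq] at ha ha'
    linarith
  have hcompp : ∀ x ∈ Cset (Vp (m := m)), connectedComponentIn Zs x = Cset Vp := by
    intro x hx
    refine comp_eq hUp (hU0.union hUm) ?_ hcovp rfl hprep hx
    rw [Set.disjoint_left]
    rintro a ha (ha' | ha')
    · simp only [Set.mem_setOf_eq] at ha ha'; linarith [ha.1]
    · simp only [Set.mem_setOf_eq] at ha ha'; linarith [ha.2, ha'.2]
  have hcompm : ∀ x ∈ Cset (Vm (m := m)), connectedComponentIn Zs x = Cset Vm := by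
    intro x hx
    refine comp_eq hUm (hU0.union hUp) ?_ hcovm rfl hprem hx
    rw [Set.disjoint_left]
    rintro a ha (ha' | ha')
    · simp only [Set.mem_setOf_eq] at ha ha'; linarith [ha.1]
    · simp only [Set.mem_setOf_eq] at ha ha'; linarith [ha.2, ha'.2]
  -- sample points
  have h0V : (0 : Fin m → ℝ) ∈ V0 := by
    show qq (0 : Fin m → ℝ) < 2
    have h0 : (0 : Fin m → ℝ) = fun _ => (0:ℝ) := rfl
    rw [h0, qq_const]; norm_num
  have hbpV : (fun _ : Fin m => (2:ℝ)) ∈ Vp := by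
    have hm2 : (2:ℝ) ≤ m := by exact_mod_cast hm
    constructor
    · show 2 < qq _
      rw [qq_const]; nlinarith
    · show 0 < sA _
      rw [sA_const]; positivity
  have hbmV : (fun _ : Fin m => (-2:ℝ)) ∈ Vm := by
    have hm2 : (2:ℝ) ≤ m := by exact_mod_cast hm
    constructor
    · show 2 < qq _
      rw [qq_const]; nlinarith
    · show sA _ < 0
      rw [sA_const]; nlinarith
  have h0mem : L 0 ∈ Cset (V0 (m := m)) := by
    rw [Cset_eq _ V0_sub]; exact ⟨0, h0V, rfl⟩
  have hpmem : L (fun _ : Fin m => (2:ℝ)) ∈ Cset (Vp (m := m)) := by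
    rw [Cset_eq _ Vp_sub]; exact ⟨_, hbpV, rfl⟩
  have hmmem : L (fun _ : Fin m => (-2:ℝ)) ∈ Cset (Vm (m := m)) := by
    rw [Cset_eq _ Vm_sub]; exact ⟨_, hbmV, rfl⟩
  -- the set of components
  have hset : {K | ∃ x ∈ Zs, K = connectedComponentIn Zs x}
      = {Cset (V0 (m := m)), Cset (Vp (m := m)), Cset (Vm (m := m))} := by
    ext K
    simp only [Set.mem_setOf_eq, Set.mem_insert_iff, Set.mem_singleton_iff]
    constructor
    · rintro ⟨x, hxZ, rfl⟩
      rcases trichotomy hm x hxZ with h | h | h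
      · exact Or.inl (hcomp0 x ⟨hxZ, h⟩)
      · exact Or.inr (Or.inl (hcompp x ⟨hxZ, h⟩))
      · exact Or.inr (Or.inr (hcompm x ⟨hxZ, h⟩))
    · rintro (rfl | rfl | rfl)
      · exact ⟨L 0, h0mem.1, (hcomp0 _ h0mem).symm⟩
      · exact ⟨L _, hpmem.1, (hcompp _ hpmem).symm⟩
      · exact ⟨L _, hmmem.1, (hcompm _ hmmem).symm⟩
  rw [hset]
  apply Set.ncard_eq_three.mpr
  refine ⟨_, _, _, ?_, ?_, ?_, rfl⟩
  · intro h
    have := h ▸ h0mem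
    have h2 := this.2
    rw [init_L] at h2
    have : 2 < qq (0 : Fin m → ℝ) := h2.1
    have h0 : (0 : Fin m → ℝ) = fun _ => (0:ℝ) := rfl
    rw [h0, qq_const] at this
    norm_num at this
  · intro h
    have := h ▸ h0mem
    have h2 := this.2
    rw [init_L] at h2
    have : 2 < qq (0 : Fin m → ℝ) := h2.1
    have h0 : (0 : Fin m → ℝ) = fun _ => (0:ℝ) := rfl
    rw [h0, qq_const] at this
    norm_num at this
  · intro h
    have := h ▸ hpmem
    have h2 := this.2
    rw [init_L] at h2
    have hneg : sA (fun _ : Fin m => (2:ℝ)) < 0 := h2.2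
    rw [sA_const] at hneg
    have hm2 : (2:ℝ) ≤ m := by exact_mod_cast hm
    nlinarith
end
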